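/- arXiv:1612.06501 — 4 statements merged into one kernel-verified Lean document; each statement's English description precedes it below -/
import Mathlib

section
/- Let g : ℝ → ℝ be Bohr almost periodic with inf g > 0 and let u*_g denote the unique bounded positive steady state. Then inf g ≤ u*_g(x) ≤ sup g for all x ∈ ℝ; in particular inf_{x ∈ ℝ} u*_g(x) > 0. -/
/-- A function `f : ℝ → ℝ` is Bohr almost periodic if for every `ε > 0` there is `L > 0`
such that every interval of length `L` contains an `ε`-almost period `s`. -/
def BohrAlmostPeriodic (f : ℝ → ℝ) : Prop :=
  ∀ ε > (0 : ℝ), ∃ L > (0 : ℝ), ∀ t : ℝ, ∃ s ∈ Set.Icc t (t + L),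
    ∀ x : ℝ, |f (x + s) - f x| < ε

/-- `u` is a bounded positive C² solution of `u'' + u (g x - u) = 0` on `ℝ`. -/
def IsBddPosSteadyState (g u : ℝ → ℝ) : Prop :=
  ContDiff ℝ 2 u ∧ (∃ C : ℝ, ∀ x : ℝ, |u x| ≤ C) ∧ (∀ x : ℝ, 0 < u x) ∧
    ∀ x : ℝ, deriv (deriv u) x + u x * (g x - u x) = 0

private lemma lemA' (f : ℝ → ℝ) (hf : ContDiff ℝ 2 f) (C : ℝ) (hC : ∀ x, f x ≤ C)
    (b : ℝ) (hb : 0 < f b) (hb' : 0 ≤ deriv f b)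
    (hpos : ∀ x, 0 < f x → 0 < deriv (deriv f) x) : False := by
  have h2 : ContDiff ℝ ((1:ℕ)+1) f := by exact_mod_cast hf
  rw [contDiff_succ_iff_deriv] at h2
  have hdf : Differentiable ℝ f := h2.1
  have h1 : ContDiff ℝ 1 (deriv f) := by exact_mod_cast h2.2.2
  have hddf : Differentiable ℝ (deriv f) := h1.differentiable one_ne_zero
  have hcont : Continuous f := hf.continuous
  have hcont' : Continuous (deriv f) := h1.continuous
  -- Step 1: f > 0 on [b, ∞)
  have key : ∀ x, b ≤ x → 0 < f x := by
    by_contra hk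
    push_neg at hk
    obtain ⟨x1, hx1, hfx1⟩ := hk
    set bad : Set ℝ := {x | b ≤ x ∧ f x ≤ 0} with hbad
    have hcl : IsClosed bad := by
      have : bad = Set.Ici b ∩ f ⁻¹' Set.Iic 0 := rfl
      rw [this]
      exact isClosed_Ici.inter (isClosed_Iic.preimage hcont)
    have hbdd : BddBelow bad := ⟨b, fun y hy => hy.1⟩
    have hne : bad.Nonempty := ⟨x1, hx1, hfx1⟩
    have hzmem : sInf bad ∈ bad := hcl.csInf_mem hne hbdd
    have hbz : b < sInf bad := by
      rcases lt_or_eq_of_le hzmem.1 with h | h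
      · exact h
      · rw [← h] at hzmem; linarith [hzmem.2]
    have hfpos : ∀ y ∈ Set.Ico b (sInf bad), 0 < f y := by
      intro y hy
      by_contra hy2
      push_neg at hy2
      exact absurd (csInf_le hbdd ⟨hy.1, hy2⟩) (not_le.mpr hy.2)
    have hmono1 : MonotoneOn (deriv f) (Set.Icc b (sInf bad)) := by
      apply monotoneOn_of_deriv_nonneg (convex_Icc b (sInf bad)) hcont'.continuousOn
        (hddf.differentiableOn)
      intro x hx
      rw [interior_Icc] at hx
      exact (hpos x (hfpos x ⟨hx.1.le, hx.2⟩)).le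
    have hmono2 : MonotoneOn f (Set.Icc b (sInf bad)) := by
      apply monotoneOn_of_deriv_nonneg (convex_Icc b (sInf bad)) hcont.continuousOn
        (hdf.differentiableOn)
      intro x hx
      rw [interior_Icc] at hx
      exact hb'.trans (hmono1 ⟨le_rfl, hbz.le⟩ ⟨hx.1.le, hx.2.le⟩ hx.1.le)
    have := hmono2 ⟨le_rfl, hbz.le⟩ ⟨hbz.le, le_rfl⟩ hbz.le
    linarith [hzmem.2]
  -- Step 2: deriv f strictly increasing on [b, ∞)
  have hstrict : StrictMonoOn (deriv f) (Set.Ici b) := by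
    apply strictMonoOn_of_deriv_pos (convex_Ici b) hcont'.continuousOn
    intro x hx
    rw [interior_Ici] at hx
    exact hpos x (key x (le_of_lt hx))
  obtain ⟨a, ha⟩ : ∃ a, a = deriv f (b+1) := ⟨_, rfl⟩
  have ha0 : 0 < a :=
    by rw [ha]; exact lt_of_le_of_lt hb' (hstrict (Set.mem_Ici.mpr le_rfl) (Set.mem_Ici.mpr (by linarith)) (by linarith))
  -- Step 3: f x - a*x monotone on [b+1, ∞)
  have hdaux : ∀ x, HasDerivAt (fun y => f y - a * y) (deriv f x - a) x := by
    intro x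
    have h1' := (hdf x).hasDerivAt
    have h2' : HasDerivAt (fun y : ℝ => a * y) a x := by
      simpa using (hasDerivAt_id x).const_mul a
    exact h1'.sub h2'
  have hmono3 : MonotoneOn (fun y => f y - a * y) (Set.Ici (b+1)) := by
    apply monotoneOn_of_deriv_nonneg (convex_Ici (b+1))
      (Continuous.continuousOn (by continuity))
      (fun x _ => ((hdaux x).differentiableAt).differentiableWithinAt)
    intro x hx
    rw [interior_Ici, Set.mem_Ioi] at hx
    rw [(hdaux x).deriv]
    have : a ≤ deriv f x := by
      rw [ha]
      exact (hstrict (Set.mem_Ici.mpr (by linarith)) (Set.mem_Ici.mpr (by linarith)) (by linarith)).le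
    linarith
  -- Step 4: contradiction
  obtain ⟨X, hX⟩ : ∃ X, X = b + 1 + (C - f (b+1) + 1)/a := ⟨_, rfl⟩
  have hX1 : b + 1 ≤ X := by
    have h0 : 0 ≤ (C - f (b+1) + 1)/a := div_nonneg (by linarith [hC (b+1)]) ha0.le
    linarith
  have hmX := hmono3 (Set.mem_Ici.mpr le_rfl) (Set.mem_Ici.mpr hX1) hX1
  have haX : a * X = a * (b+1) + (C - f (b+1) + 1) := by
    rw [hX]; field_simp
  simp only at hmX
  linarith [hC X]

private lemma lemB (f : ℝ → ℝ) (hf : ContDiff ℝ 2 f) (C : ℝ) (hC : ∀ x, f x ≤ C)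
    (b : ℝ) (hb : 0 < f b)
    (hpos : ∀ x, 0 < f x → 0 < deriv (deriv f) x) : False := by
  rcases le_or_gt 0 (deriv f b) with h | h
  · exact lemA' f hf C hC b hb h hpos
  · set F : ℝ → ℝ := fun x => f (-x) with hF
    have hFc : ContDiff ℝ 2 F := hf.comp (contDiff_neg)
    have hdF : deriv F = fun x => -deriv f (-x) := funext fun x => deriv_comp_neg f x
    have hddF : ∀ x, deriv (deriv F) x = deriv (deriv f) (-x) := by
      intro x
      rw [hdF]
      have : deriv (fun x : ℝ => -deriv f (-x)) x = -deriv (fun x : ℝ => deriv f (-x)) x := by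
        simp [deriv.neg]
      rw [this, deriv_comp_neg (deriv f) x, neg_neg]
    apply lemA' F hFc C (fun x => hC (-x)) (-b)
    · show 0 < f (-(-b)); rw [neg_neg]; exact hb
    · rw [hdF]; simp only [neg_neg]; linarith
    · intro x hx; rw [hddF]; exact hpos (-x) hx

theorem steady_state_bounds (g ustar : ℝ → ℝ) (hg : BohrAlmostPeriodic g)
    (hginf : ∃ m > (0 : ℝ), ∀ x : ℝ, m ≤ g x)
    (hstar : IsBddPosSteadyState g ustar) :
    (∀ x : ℝ, sInf (Set.range g) ≤ ustar x ∧ ustar x ≤ sSup (Set.range g)) ∧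
      0 < sInf (Set.range ustar) := by
  obtain ⟨m, hm, hmg⟩ := hginf
  obtain ⟨hu2, ⟨C, hC⟩, hupos, heq⟩ := hstar
  have h2 : ContDiff ℝ ((1:ℕ)+1) ustar := by exact_mod_cast hu2
  rw [contDiff_succ_iff_deriv] at h2
  have hdu : Differentiable ℝ ustar := h2.1
  have h1 : ContDiff ℝ 1 (deriv ustar) := by exact_mod_cast h2.2.2
  have hucont : Continuous ustar := hu2.continuous
  have hddcont : Continuous (deriv (deriv ustar)) := h1.continuous_deriv le_rfl
  -- the second derivative, rearranged
  have hdd_eq : ∀ x, deriv (deriv ustar) x = ustar x * (ustar x - g x) := by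
    intro x; linear_combination heq x
  -- g is continuous
  have hgeq : g = fun x => ustar x - deriv (deriv ustar) x / ustar x := by
    funext x
    have h0 := (hupos x).ne'
    field_simp
    linear_combination heq x
  have hgcont : Continuous g := by
    rw [hgeq]
    exact hucont.sub (hddcont.div hucont fun x => (hupos x).ne')
  -- g is bounded above
  obtain ⟨L, hL, hap⟩ := hg 1 one_pos
  have hbdimg : BddAbove (g '' Set.Icc 0 L) := (isCompact_Icc.image hgcont).bddAbove
  have hgB : ∀ x, g x ≤ sSup (g '' Set.Icc 0 L) + 1 := by
    intro x
    obtain ⟨s, hs, hs2⟩ := hap (x - L)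
    have hy : x - s ∈ Set.Icc (0:ℝ) L := by
      constructor
      · linarith [hs.2]
      · linarith [hs.1]
    have h2' := hs2 (x - s)
    rw [show x - s + s = x by ring] at h2'
    have h3 := (abs_lt.mp h2').2
    have hle : g (x - s) ≤ sSup (g '' Set.Icc 0 L) := le_csSup hbdimg ⟨x - s, hy, rfl⟩
    linarith
  have hrngA : BddAbove (Set.range g) :=
    ⟨sSup (g '' Set.Icc 0 L) + 1, by rintro y ⟨x, rfl⟩; exact hgB x⟩
  have hrngB : BddBelow (Set.range g) := ⟨m, by rintro y ⟨x, rfl⟩; exact hmg x⟩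
  have hne : (Set.range g).Nonempty := ⟨g 0, 0, rfl⟩
  have hm0le : ∀ x, sInf (Set.range g) ≤ g x := fun x => csInf_le hrngB ⟨x, rfl⟩
  have hgM : ∀ x, g x ≤ sSup (Set.range g) := fun x => le_csSup hrngA ⟨x, rfl⟩
  have hmm0 : m ≤ sInf (Set.range g) := le_csInf hne (by rintro y ⟨x, rfl⟩; exact hmg x)
  have hm0M : sInf (Set.range g) ≤ sSup (Set.range g) := (hm0le 0).trans (hgM 0)
  -- lower bound
  have hlow : ∀ x, sInf (Set.range g) ≤ ustar x := by
    intro x0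
    by_contra hlt
    push_neg at hlt
    set K := (ustar x0 + sInf (Set.range g))/2 with hK
    have hfC : ContDiff ℝ 2 (fun x => K - ustar x) := contDiff_const.sub hu2
    apply lemB (fun x => K - ustar x) hfC K (fun x => by show K - ustar x ≤ K; linarith [hupos x]) x0
      (by show (0:ℝ) < K - ustar x0; linarith)
    intro x hx
    have e1 : deriv (fun x => K - ustar x) = fun x => -deriv ustar x := by
      funext y
      simp [deriv_const_sub]
    have e2 : deriv (deriv (fun x => K - ustar x)) x = -(deriv (deriv ustar) x) := by
      rw [e1]
      simp [deriv.neg]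
    rw [e2, hdd_eq x]
    have h3 : ustar x < K := by linarith
    have h4 : K < sInf (Set.range g) := by linarith
    nlinarith [hupos x, hm0le x]
  -- upper bound
  have hupp : ∀ x, ustar x ≤ sSup (Set.range g) := by
    intro x0
    by_contra hlt
    push_neg at hlt
    set K := (sSup (Set.range g) + ustar x0)/2 with hK
    have hfC : ContDiff ℝ 2 (fun x => ustar x - K) := hu2.sub contDiff_const
    apply lemB (fun x => ustar x - K) hfC (C - K)
      (fun x => by show ustar x - K ≤ C - K; linarith [le_abs_self (ustar x), hC x]) x0
      (by show (0:ℝ) < ustar x0 - K; linarith)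
    intro x hx
    have e1 : deriv (fun x => ustar x - K) = deriv ustar := funext fun y => deriv_sub_const K
    have e2 : deriv (deriv (fun x => ustar x - K)) x = deriv (deriv ustar) x := by rw [e1]
    rw [e2, hdd_eq x]
    have h3 : K < ustar x := by linarith
    have h4 : sSup (Set.range g) < K := by linarith
    nlinarith [hgM x, hupos x, hmm0, hm]
  refine ⟨fun x => ⟨hlow x, hupp x⟩, ?_⟩
  have : m ≤ sInf (Set.range ustar) :=
    le_csInf ⟨ustar 0, 0, rfl⟩ (by rintro y ⟨x, rfl⟩; exact hmm0.trans (hlow x))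
  linarith
end

section
/- Let g : ℝ → ℝ be Bohr almost periodic with inf g > 0 and let u*_g denote the unique bounded positive steady state. Then u*_g is itself Bohr almost periodic: for every ε > 0 there exists L > 0 such that every interval of length L contains s with sup_{x ∈ ℝ} |u*_g(x + s) − u*_g(x)| < ε. -/
lemma diff_of_contDiff2 {u : ℝ → ℝ} (h : ContDiff ℝ 2 u) :
    Differentiable ℝ u ∧ Differentiable ℝ (deriv u) := by
  have h' : ContDiff ℝ ((1 : WithTop ℕ∞) + 1) u := by
    norm_num at h ⊢
    exact h
  obtain ⟨h1, -, h2⟩ := contDiff_succ_iff_deriv.mp h'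
  exact ⟨h1, h2.differentiable one_ne_zero⟩

lemma aux_lower_right (g u : ℝ → ℝ) (m x1 : ℝ)
    (hu : Differentiable ℝ u) (hdu : Differentiable ℝ (deriv u))
    (hode : ∀ x, deriv (deriv u) x + u x * (g x - u x) = 0)
    (hpos : ∀ x, 0 < u x) (hgm : ∀ x, m ≤ g x)
    (h1 : u x1 < m) (h2 : deriv u x1 ≤ 0) : False := by
  have hdd : ∀ x, deriv (deriv u) x = u x * (u x - g x) := by
    intro x; have h := hode x; nlinarith [h]
  have hddneg : ∀ x, u x < m → deriv (deriv u) x < 0 := by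
    intro x hx
    rw [hdd x]
    exact mul_neg_of_pos_of_neg (hpos x) (by linarith [hgm x])
  -- Claim: u < m on [x1, ∞)
  have hA : ∀ x, x1 ≤ x → u x < m := by
    by_contra hcon
    push_neg at hcon
    obtain ⟨b0, hb0x, hb0⟩ := hcon
    set B := {b | x1 ≤ b ∧ m ≤ u b} with hBdef
    have hBne : B.Nonempty := ⟨b0, hb0x, hb0⟩
    have hBbd : BddBelow B := ⟨x1, fun b hb => hb.1⟩
    set T := sInf B with hTdef
    have hTx1 : x1 ≤ T := le_csInf hBne fun b hb => hb.1
    have huT : m ≤ u T := by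
      by_contra hT
      push_neg at hT
      have hev : ∀ᶠ y in nhds T, u y < m :=
        Filter.Tendsto.eventually_lt_const hT hu.continuous.continuousAt
      obtain ⟨η, hη, hball⟩ := Metric.eventually_nhds_iff.mp hev
      obtain ⟨b, hbB, hbT⟩ := (csInf_lt_iff hBbd hBne).mp (show sInf B < T + η by
        rw [← hTdef]; linarith)
      have hTb : T ≤ b := csInf_le hBbd hbB
      have : u b < m := hball (by rw [Real.dist_eq, abs_lt]; constructor <;> linarith)
      exact absurd hbB.2 (not_le.mpr this)
    have hTne : x1 < T := by
      rcases eq_or_lt_of_le hTx1 with h | h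
      · exact absurd huT (not_le.mpr (h ▸ h1))
      · exact h
    have hIoo : ∀ y ∈ Set.Ioo x1 T, u y < m := by
      intro y hy
      by_contra hge
      push_neg at hge
      exact absurd (csInf_le hBbd ⟨hy.1.le, hge⟩) (not_le.mpr hy.2)
    have hanti : StrictAntiOn (deriv u) (Set.Icc x1 T) :=
      strictAntiOn_of_deriv_neg (convex_Icc _ _) hdu.continuous.continuousOn
        (fun y hy => by rw [interior_Icc] at hy; exact hddneg y (hIoo y hy))
    have hanti2 : StrictAntiOn u (Set.Icc x1 T) := by
      apply strictAntiOn_of_deriv_neg (convex_Icc _ _) hu.continuous.continuousOn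
      intro y hy
      rw [interior_Icc] at hy
      have := hanti (Set.left_mem_Icc.mpr hTne.le) ⟨hy.1.le, hy.2.le⟩ hy.1
      linarith
    have : u T < u x1 :=
      hanti2 (Set.left_mem_Icc.mpr hTne.le) (Set.right_mem_Icc.mpr hTne.le) hTne
    linarith
  have hanti : StrictAntiOn (deriv u) (Set.Ici x1) :=
    strictAntiOn_of_deriv_neg (convex_Ici _) hdu.continuous.continuousOn
      (fun y hy => by rw [interior_Ici] at hy; exact hddneg y (hA y hy.le))
  set δ := -(deriv u (x1 + 1)) with hδdef
  have hδ : 0 < δ := by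
    have : deriv u (x1 + 1) < deriv u x1 :=
      hanti (Set.mem_Ici.mpr le_rfl) (Set.mem_Ici.mpr (by linarith)) (by linarith)
    rw [hδdef]; linarith
  have hf : AntitoneOn (fun x => u x + δ * x) (Set.Ici (x1 + 1)) := by
    apply antitoneOn_of_deriv_nonpos (convex_Ici _)
    · exact (hu.continuous.add (continuous_const.mul continuous_id)).continuousOn
    · intro y hy
      exact ((hu y).add (((differentiableAt_fun_id).const_mul δ))).differentiableWithinAt
    · intro y hy
      rw [interior_Ici] at hy
      rw [Set.mem_Ioi] at hy
      have hder : deriv (fun x => u x + δ * x) y = deriv u y + δ := by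
        rw [deriv_fun_add (hu y) ((differentiableAt_fun_id).const_mul δ),
          deriv_const_mul _ differentiableAt_fun_id]
        simp
      rw [hder]
      have : deriv u y < deriv u (x1 + 1) :=
        hanti (Set.mem_Ici.mpr (by linarith)) (Set.mem_Ici.mpr (by linarith)) hy
      rw [hδdef] at *
      linarith
  set x2 := x1 + 1 + u (x1 + 1) / δ + 1 with hx2def
  have hx2 : x1 + 1 ≤ x2 := by
    have : 0 < u (x1 + 1) / δ := div_pos (hpos _) hδ
    rw [hx2def]; linarith
  have hle : u x2 + δ * x2 ≤ u (x1 + 1) + δ * (x1 + 1) :=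
    hf (Set.mem_Ici.mpr le_rfl) (Set.mem_Ici.mpr hx2) hx2
  have hcanc : δ * (u (x1 + 1) / δ) = u (x1 + 1) := by
    field_simp
  have : u x2 ≤ -δ := by
    have hexp : δ * x2 = δ * (x1 + 1) + u (x1 + 1) + δ := by
      rw [hx2def]; rw [mul_add, mul_add, hcanc]; ring
    linarith
  linarith [hpos x2]

lemma reflect_facts (u : ℝ → ℝ) (hu : Differentiable ℝ u) (hdu : Differentiable ℝ (deriv u)) :
    Differentiable ℝ (fun x => u (-x)) ∧ Differentiable ℝ (deriv (fun x => u (-x))) ∧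
    (∀ x, deriv (fun x => u (-x)) x = -deriv u (-x)) ∧
    (∀ x, deriv (deriv (fun x => u (-x))) x = deriv (deriv u) (-x)) := by
  have hd1 : deriv (fun x => u (-x)) = fun x => -deriv u (-x) :=
    funext fun x => deriv_comp_neg u x
  have h1 : Differentiable ℝ (fun x => u (-x)) := hu.comp differentiable_neg
  have h2 : Differentiable ℝ (deriv (fun x => u (-x))) := by
    rw [hd1]; exact (hdu.comp differentiable_neg).neg
  refine ⟨h1, h2, fun x => deriv_comp_neg u x, fun x => ?_⟩
  rw [hd1]
  have : deriv (fun y => -deriv u (-y)) x = -deriv (fun y => deriv u (-y)) x := deriv.neg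
  rw [this, deriv_comp_neg (deriv u) x, neg_neg]

lemma lower_bound (g u : ℝ → ℝ) (m : ℝ)
    (hu : Differentiable ℝ u) (hdu : Differentiable ℝ (deriv u))
    (hode : ∀ x, deriv (deriv u) x + u x * (g x - u x) = 0)
    (hpos : ∀ x, 0 < u x) (hgm : ∀ x, m ≤ g x) : ∀ x, m ≤ u x := by
  by_contra hcon
  push_neg at hcon
  obtain ⟨x1, h1⟩ := hcon
  rcases le_or_gt (deriv u x1) 0 with h2 | h2
  · exact aux_lower_right g u m x1 hu hdu hode hpos hgm h1 h2
  · obtain ⟨hr1, hr2, hr3, hr4⟩ := reflect_facts u hu hdu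
    apply aux_lower_right (fun x => g (-x)) (fun x => u (-x)) m (-x1) hr1 hr2
    · intro x
      rw [hr4 x]
      exact hode (-x)
    · exact fun x => hpos (-x)
    · exact fun x => hgm (-x)
    · simpa using h1
    · rw [hr3 (-x1), neg_neg]
      linarith

lemma key_aux (g1 g2 u v : ℝ → ℝ) (m C ε x1 : ℝ) (hm : 0 < m) (hε : 0 < ε)
    (hu : Differentiable ℝ u) (hdu : Differentiable ℝ (deriv u))
    (hv : Differentiable ℝ v) (hdv : Differentiable ℝ (deriv v))
    (huode : ∀ x, deriv (deriv u) x + u x * (g1 x - u x) = 0)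
    (hvode : ∀ x, deriv (deriv v) x + v x * (g2 x - v x) = 0)
    (hul : ∀ x, m ≤ u x) (hvl : ∀ x, m ≤ v x)
    (huC : ∀ x, u x ≤ C) (hvC : ∀ x, v x ≤ C)
    (hgg : ∀ x, |g2 x - g1 x| < ε)
    (hq1 : 1 + 2 * ε / m < v x1 / u x1)
    (hW1 : 0 ≤ u x1 * deriv v x1 - v x1 * deriv u x1) : False := by
  have hupos : ∀ x, 0 < u x := fun x => lt_of_lt_of_le hm (hul x)
  have hvpos : ∀ x, 0 < v x := fun x => lt_of_lt_of_le hm (hvl x)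
  have hC : 0 < C := lt_of_lt_of_le hm (le_trans (hul 0) (huC 0))
  set W : ℝ → ℝ := fun x => u x * deriv v x - v x * deriv u x with hWdef
  set q : ℝ → ℝ := fun x => v x / u x with hqdef
  set r : ℝ := 1 + 2 * ε / m with hrdef
  set δ : ℝ := m ^ 2 * ε with hδdef
  have hδ : 0 < δ := by rw [hδdef]; positivity
  have hr1 : 1 < r := by
    have h0 : (0:ℝ) < 2 * ε / m := by positivity
    rw [hrdef]
    linarith
  -- derivative of W
  have hWd : ∀ x, HasDerivAt W (u x * v x * ((v x - u x) - (g2 x - g1 x))) x := by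
    intro x
    have h1 : HasDerivAt W
        (deriv u x * deriv v x + u x * deriv (deriv v) x -
          (deriv v x * deriv u x + v x * deriv (deriv u) x)) x :=
      ((hu x).hasDerivAt.mul (hdv x).hasDerivAt).sub ((hv x).hasDerivAt.mul (hdu x).hasDerivAt)
    have e1 : deriv (deriv u) x = u x * (u x - g1 x) := by nlinarith [huode x]
    have e2 : deriv (deriv v) x = v x * (v x - g2 x) := by nlinarith [hvode x]
    have e3 : deriv u x * deriv v x + u x * deriv (deriv v) x -
        (deriv v x * deriv u x + v x * deriv (deriv u) x) =
        u x * v x * ((v x - u x) - (g2 x - g1 x)) := by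
      rw [e1, e2]; ring
    exact e3 ▸ h1
  have hWcont : Continuous W :=
    (hu.continuous.mul hdv.continuous).sub (hv.continuous.mul hdu.continuous)
  -- derivative of q
  have hqd : ∀ x, HasDerivAt q (W x / u x ^ 2) x := by
    intro x
    have h1 := (hv x).hasDerivAt.div (hu x).hasDerivAt (ne_of_gt (hupos x))
    have e1 : (deriv v x * u x - v x * deriv u x) / u x ^ 2 = W x / u x ^ 2 := by
      rw [hWdef]; ring_nf
    exact e1 ▸ h1
  have hqcont : Continuous q := hv.continuous.div hu.continuous fun x => ne_of_gt (hupos x)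
  have hqle : ∀ x, q x ≤ C / m := fun x => div_le_div₀ hC.le (hvC x) hm (hul x)
  -- growth of W in the region q ≥ r
  have hreg : ∀ x, r ≤ q x → δ ≤ u x * v x * ((v x - u x) - (g2 x - g1 x)) := by
    intro x hx
    have hru : r * u x ≤ v x := (le_div_iff₀ (hupos x)).mp hx
    have h3 : 2 * ε / m * m = 2 * ε := div_mul_cancel₀ _ hm.ne'
    have h4 : 2 * ε / m * m ≤ 2 * ε / m * u x :=
      mul_le_mul_of_nonneg_left (hul x) (by positivity)
    have h2 : 2 * ε ≤ v x - u x := by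
      rw [hrdef] at hru
      nlinarith
    have h5 : g2 x - g1 x < ε := lt_of_le_of_lt (le_abs_self _) (hgg x)
    have h6 : ε ≤ (v x - u x) - (g2 x - g1 x) := by linarith
    have h7 : m * m ≤ u x * v x :=
      mul_le_mul (hul x) (hvl x) hm.le (hupos x).le
    calc δ = m * m * ε := by rw [hδdef]; ring
      _ ≤ u x * v x * ((v x - u x) - (g2 x - g1 x)) :=
        mul_le_mul h7 h6 hε.le (mul_nonneg (hupos x).le (hvpos x).le)
  have hqx1 : r < q x1 := hq1
  -- q stays ≥ r to the right of x1
  have Pright : ∀ b, x1 ≤ b → r ≤ q b := by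
    by_contra hcon
    push_neg at hcon
    obtain ⟨b0, hb0x, hb0⟩ := hcon
    set B := {b | x1 ≤ b ∧ q b < r} with hBdef
    have hBne : B.Nonempty := ⟨b0, hb0x, hb0⟩
    have hBbd : BddBelow B := ⟨x1, fun b hb => hb.1⟩
    set T := sInf B with hTdef
    have hTx1 : x1 ≤ T := le_csInf hBne fun b hb => hb.1
    have hqT : q T ≤ r := by
      by_contra hgt
      push_neg at hgt
      have hev : ∀ᶠ y in nhds T, r < q y :=
        Filter.Tendsto.eventually_const_lt hgt hqcont.continuousAt
      obtain ⟨η, hη, hball⟩ := Metric.eventually_nhds_iff.mp hev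
      obtain ⟨b, hbB, hbT⟩ := (csInf_lt_iff hBbd hBne).mp (show sInf B < T + η by
        rw [← hTdef]; linarith)
      have hTb : T ≤ b := csInf_le hBbd hbB
      have : r < q b := hball (by rw [Real.dist_eq, abs_lt]; constructor <;> linarith)
      exact absurd hbB.2 (not_lt.mpr this.le)
    have hTgt : x1 < T := by
      rcases eq_or_lt_of_le hTx1 with h | h
      · exact absurd (h ▸ hqT) (not_le.mpr hqx1)
      · exact h
    have hIoo : ∀ y, y ∈ Set.Ioo x1 T → r ≤ q y := by
      intro y hy
      by_contra hlt
      push_neg at hlt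
      exact absurd (csInf_le hBbd ⟨hy.1.le, hlt⟩) (not_le.mpr hy.2)
    have hWmono : MonotoneOn (fun x => W x - δ * (x - x1)) (Set.Icc x1 T) := by
      apply monotoneOn_of_hasDerivWithinAt_nonneg (convex_Icc _ _)
        (f' := fun x => u x * v x * ((v x - u x) - (g2 x - g1 x)) - δ)
      · exact (hWcont.sub (continuous_const.mul (continuous_id.sub continuous_const))).continuousOn
      · intro x hx
        have hlin : HasDerivAt (fun y : ℝ => δ * (y - x1)) δ x := by
          simpa using ((hasDerivAt_id x).sub_const x1).const_mul δ
        exact ((hWd x).sub hlin).hasDerivWithinAt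
      · intro x hx
        rw [interior_Icc] at hx
        have := hreg x (hIoo x hx)
        linarith
    have hWge : ∀ x, x ∈ Set.Icc x1 T → 0 ≤ W x := by
      intro x hx
      have h1 : W x1 - δ * (x1 - x1) ≤ W x - δ * (x - x1) :=
        hWmono (Set.left_mem_Icc.mpr hTgt.le) hx hx.1
      have h2 : 0 ≤ W x1 := hW1
      have h3 : 0 ≤ δ * (x - x1) := mul_nonneg hδ.le (by linarith [hx.1])
      have e0 : δ * (x1 - x1) = 0 := by ring
      linarith
    have hqmono : MonotoneOn q (Set.Icc x1 T) := by
      apply monotoneOn_of_hasDerivWithinAt_nonneg (convex_Icc _ _) hqcont.continuousOn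
        (f' := fun x => W x / u x ^ 2)
      · exact fun x _ => (hqd x).hasDerivWithinAt
      · intro x hx
        rw [interior_Icc] at hx
        exact div_nonneg (hWge x ⟨hx.1.le, hx.2.le⟩) (sq_nonneg _)
    have : q x1 ≤ q T :=
      hqmono (Set.left_mem_Icc.mpr hTgt.le) (Set.right_mem_Icc.mpr hTgt.le) hTgt.le
    linarith
  -- hence W grows linearly and q blows up
  have hWmono2 : MonotoneOn (fun x => W x - δ * (x - x1)) (Set.Ici x1) := by
    apply monotoneOn_of_hasDerivWithinAt_nonneg (convex_Ici _)
      (f' := fun x => u x * v x * ((v x - u x) - (g2 x - g1 x)) - δ)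
    · exact (hWcont.sub (continuous_const.mul (continuous_id.sub continuous_const))).continuousOn
    · intro x hx
      have hlin : HasDerivAt (fun y : ℝ => δ * (y - x1)) δ x := by
        simpa using ((hasDerivAt_id x).sub_const x1).const_mul δ
      exact ((hWd x).sub hlin).hasDerivWithinAt
    · intro x hx
      rw [interior_Ici] at hx
      have := hreg x (Pright x hx.le)
      linarith
  have hWge2 : ∀ x, x1 ≤ x → δ * (x - x1) ≤ W x := by
    intro x hx
    have h1 : W x1 - δ * (x1 - x1) ≤ W x - δ * (x - x1) :=
      hWmono2 (Set.mem_Ici.mpr le_rfl) (Set.mem_Ici.mpr hx) hx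
    have hWx1 : 0 ≤ W x1 := hW1
    have e0 : δ * (x1 - x1) = 0 := by ring
    linarith
  have hqmono2 : MonotoneOn (fun x => q x - δ / (2 * C ^ 2) * (x - x1) ^ 2) (Set.Ici x1) := by
    apply monotoneOn_of_hasDerivWithinAt_nonneg (convex_Ici _)
      (f' := fun x => W x / u x ^ 2 - δ / (2 * C ^ 2) * (2 * (x - x1)))
    · exact (hqcont.sub (continuous_const.mul
        ((continuous_id.sub continuous_const).pow 2))).continuousOn
    · intro x hx
      have hpar : HasDerivAt (fun y : ℝ => δ / (2 * C ^ 2) * (y - x1) ^ 2)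
          (δ / (2 * C ^ 2) * (2 * (x - x1))) x := by
        have := (((hasDerivAt_id x).sub_const x1).pow 2).const_mul (δ / (2 * C ^ 2))
        simpa using this
      exact ((hqd x).sub hpar).hasDerivWithinAt
    · intro x hx
      rw [interior_Ici] at hx
      have h1 : δ * (x - x1) ≤ W x := hWge2 x hx.le
      have h2 : 0 ≤ δ * (x - x1) := mul_nonneg hδ.le (by linarith [(Set.mem_Ioi.mp hx).le])
      have h3 : u x ^ 2 ≤ C ^ 2 := pow_le_pow_left₀ (hupos x).le (huC x) 2
      have h4 : δ * (x - x1) / C ^ 2 ≤ W x / u x ^ 2 :=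
        div_le_div₀ (le_trans h2 h1) h1 (pow_pos (hupos x) 2) h3
      have h5 : δ / (2 * C ^ 2) * (2 * (x - x1)) = δ * (x - x1) / C ^ 2 := by
        field_simp
      rw [h5]
      linarith
  -- blow-up point
  set t : ℝ := 2 * C ^ 2 / δ * (C / m) + 1 with htdef
  have ht1 : 1 ≤ t := by
    have : 0 ≤ 2 * C ^ 2 / δ * (C / m) := by positivity
    rw [htdef]; linarith
  have hkey : C / m < δ / (2 * C ^ 2) * t ^ 2 := by
    have h1 : δ / (2 * C ^ 2) * t ≤ δ / (2 * C ^ 2) * t ^ 2 := by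
      have h0 : 0 < δ / (2 * C ^ 2) := by positivity
      have h0' : t ≤ t ^ 2 := by nlinarith
      exact mul_le_mul_of_nonneg_left h0' h0.le
    have h2 : δ / (2 * C ^ 2) * t = C / m + δ / (2 * C ^ 2) := by
      rw [htdef]
      field_simp
    have h3 : 0 < δ / (2 * C ^ 2) := by positivity
    linarith
  have hfin : q x1 - δ / (2 * C ^ 2) * (x1 - x1) ^ 2 ≤
      q (x1 + t) - δ / (2 * C ^ 2) * ((x1 + t) - x1) ^ 2 :=
    hqmono2 (Set.mem_Ici.mpr le_rfl) (Set.mem_Ici.mpr (by linarith)) (by linarith)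
  have he1 : ((x1 + t) - x1) ^ 2 = t ^ 2 := by ring
  have he2 : (x1 - x1 : ℝ) ^ 2 = 0 := by ring
  rw [he1, he2] at hfin
  have := hqle (x1 + t)
  have hq0 : 0 < q x1 := lt_trans (by linarith) hqx1
  nlinarith

lemma reflect_facts2 (u : ℝ → ℝ) (hu : Differentiable ℝ u) (hdu : Differentiable ℝ (deriv u)) :
    Differentiable ℝ (fun x => u (-x)) ∧ Differentiable ℝ (deriv (fun x => u (-x))) ∧
    (∀ x, deriv (fun x => u (-x)) x = -deriv u (-x)) ∧
    (∀ x, deriv (deriv (fun x => u (-x))) x = deriv (deriv u) (-x)) := by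
  have hd1 : deriv (fun x => u (-x)) = fun x => -deriv u (-x) :=
    funext fun x => deriv_comp_neg u x
  have h1 : Differentiable ℝ (fun x => u (-x)) := hu.comp differentiable_neg
  have h2 : Differentiable ℝ (deriv (fun x => u (-x))) := by
    rw [hd1]; exact (hdu.comp differentiable_neg).neg
  refine ⟨h1, h2, fun x => deriv_comp_neg u x, fun x => ?_⟩
  rw [hd1]
  have h3 : deriv (fun y => -deriv u (-y)) x = -deriv (fun y => deriv u (-y)) x := deriv.neg
  rw [h3, deriv_comp_neg (deriv u) x, neg_neg]

lemma key (g1 g2 u v : ℝ → ℝ) (m C ε : ℝ) (hm : 0 < m) (hε : 0 < ε)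
    (hu : Differentiable ℝ u) (hdu : Differentiable ℝ (deriv u))
    (hv : Differentiable ℝ v) (hdv : Differentiable ℝ (deriv v))
    (huode : ∀ x, deriv (deriv u) x + u x * (g1 x - u x) = 0)
    (hvode : ∀ x, deriv (deriv v) x + v x * (g2 x - v x) = 0)
    (hul : ∀ x, m ≤ u x) (hvl : ∀ x, m ≤ v x)
    (huC : ∀ x, u x ≤ C) (hvC : ∀ x, v x ≤ C)
    (hgg : ∀ x, |g2 x - g1 x| < ε) :
    ∀ x, v x - u x ≤ 2 * C * ε / m := by
  have hupos : ∀ x, 0 < u x := fun x => lt_of_lt_of_le hm (hul x)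
  have hq : ∀ x, v x / u x ≤ 1 + 2 * ε / m := by
    by_contra hcon
    push_neg at hcon
    obtain ⟨x1, hx1⟩ := hcon
    rcases le_or_gt 0 (u x1 * deriv v x1 - v x1 * deriv u x1) with hW | hW
    · exact key_aux g1 g2 u v m C ε x1 hm hε hu hdu hv hdv huode hvode hul hvl huC hvC hgg hx1 hW
    · obtain ⟨hu1, hu2, hu3, hu4⟩ := reflect_facts2 u hu hdu
      obtain ⟨hv1, hv2, hv3, hv4⟩ := reflect_facts2 v hv hdv
      apply key_aux (fun x => g1 (-x)) (fun x => g2 (-x)) (fun x => u (-x)) (fun x => v (-x))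
        m C ε (-x1) hm hε hu1 hu2 hv1 hv2
      · intro x; rw [hu4 x]; exact huode (-x)
      · intro x; rw [hv4 x]; exact hvode (-x)
      · exact fun x => hul (-x)
      · exact fun x => hvl (-x)
      · exact fun x => huC (-x)
      · exact fun x => hvC (-x)
      · exact fun x => hgg (-x)
      · simpa using hx1
      · rw [hu3 (-x1), hv3 (-x1), neg_neg]
        linarith
  intro x
  have h1 : v x ≤ (1 + 2 * ε / m) * u x := (div_le_iff₀ (hupos x)).mp (hq x)
  have h2 : 2 * ε / m * u x ≤ 2 * ε / m * C := mul_le_mul_of_nonneg_left (huC x) (by positivity)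
  have h3 : 2 * ε / m * C = 2 * C * ε / m := by ring
  nlinarith

theorem steady_state_almost_periodic (g ustar : ℝ → ℝ) (hg : BohrAlmostPeriodic g)
    (hginf : ∃ m > (0 : ℝ), ∀ x : ℝ, m ≤ g x)
    (hstar : IsBddPosSteadyState g ustar) :
    BohrAlmostPeriodic ustar := by
  obtain ⟨hu2, ⟨C, hC⟩, hpos, hode⟩ := hstar
  obtain ⟨m, hm, hgm⟩ := hginf
  obtain ⟨hu, hdu⟩ := diff_of_contDiff2 hu2
  have hul : ∀ x, m ≤ ustar x := lower_bound g ustar m hu hdu hode hpos hgm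
  have huC : ∀ x, ustar x ≤ C := fun x => le_trans (le_abs_self _) (hC x)
  have hC0 : 0 < C := lt_of_lt_of_le hm (le_trans (hul 0) (huC 0))
  intro ε₀ hε₀
  set ε : ℝ := ε₀ * m / (4 * C) with hεdef
  have hε : 0 < ε := by rw [hεdef]; positivity
  obtain ⟨L, hL, hLs⟩ := hg ε hε
  refine ⟨L, hL, fun t => ?_⟩
  obtain ⟨s, hs, hgs⟩ := hLs t
  refine ⟨s, hs, fun x => ?_⟩
  -- the shifted function
  have hv2 : ContDiff ℝ 2 (fun y => ustar (y + s)) := hu2.comp (contDiff_id.add contDiff_const)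
  obtain ⟨hvd, hvdd⟩ := diff_of_contDiff2 hv2
  have hder_v : deriv (fun y => ustar (y + s)) = fun y => deriv ustar (y + s) :=
    funext fun y => deriv_comp_add_const ustar s y
  have hvode : ∀ y, deriv (deriv (fun y => ustar (y + s))) y +
      (fun y => ustar (y + s)) y * (g (y + s) - (fun y => ustar (y + s)) y) = 0 := by
    intro y
    simp only
    rw [hder_v, deriv_comp_add_const (deriv ustar) s y]
    exact hode (y + s)
  have h1 : ∀ y, (fun y => ustar (y + s)) y - ustar y ≤ 2 * C * ε / m :=
    key g (fun y => g (y + s)) ustar (fun y => ustar (y + s)) m C ε hm hε hu hdu hvd hvdd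
      hode hvode hul (fun y => hul (y + s)) huC (fun y => huC (y + s)) (fun y => hgs y)
  have h2 : ∀ y, ustar y - (fun y => ustar (y + s)) y ≤ 2 * C * ε / m :=
    key (fun y => g (y + s)) g (fun y => ustar (y + s)) ustar m C ε hm hε hvd hvdd hu hdu
      hvode hode (fun y => hul (y + s)) hul (fun y => huC (y + s)) huC
      (fun y => by rw [abs_sub_comm]; exact hgs y)
  have hval : 2 * C * ε / m = ε₀ / 2 := by
    rw [hεdef]
    field_simp
    ring
  have ha := h1 x
  have hb := h2 x
  simp only at ha hb
  rw [abs_lt]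
  constructor <;> [skip; skip] <;> rw [hval] at ha hb <;> linarith
end

section
/- Let g : ℝ → ℝ be Bohr almost periodic with inf g > 0 and let u*_g denote the unique bounded positive steady state. Let u₀ : ℝ → ℝ be continuous with 0 < m ≤ u₀(x) ≤ M for all x ∈ ℝ, for some constants m, M. If u : ℝ × [0, ∞) → ℝ is a bounded classical solution of the Cauchy problem u_t = u_{xx} + u(g(x) − u) for x ∈ ℝ, t > 0 (C² in x, C¹ in t on ℝ × (0,∞), continuous on ℝ × [0,∞)) with u(x, 0) = u₀(x), then sup_{x ∈ ℝ} |u(x, t) − u*_g(x)| → 0 as t → +∞. -/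
set_option maxHeartbeats 1000000
open Filter Set Topology


lemma aux_eventually_deriv_neg (f : ℝ → ℝ) (a : ℝ)
    (hd2 : DifferentiableAt ℝ (deriv f) a) (h0 : deriv f a = 0)
    (hneg : deriv (deriv f) a < 0) : ∀ᶠ y in 𝓝[>] a, deriv f y < 0 := by
  have h := hd2.hasDerivAt
  rw [hasDerivAt_iff_tendsto_slope] at h
  have h2 : ∀ᶠ y in 𝓝[≠] a, slope (deriv f) a y < 0 := h.eventually (Iio_mem_nhds hneg)
  have h3 : ∀ᶠ y in 𝓝[>] a, slope (deriv f) a y < 0 :=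
    h2.filter_mono (nhdsWithin_mono a (fun x hx => ne_of_gt hx))
  filter_upwards [h3, self_mem_nhdsWithin] with y hy hya
  rw [slope_def_field, h0, sub_zero] at hy
  have hya' : 0 < y - a := sub_pos.mpr hya
  by_contra hcon
  push_neg at hcon
  nlinarith [div_nonneg hcon (le_of_lt hya')]


lemma aux_min_second_deriv (f : ℝ → ℝ) (a : ℝ)
    (hd : ∀ y, DifferentiableAt ℝ f y)
    (hd2 : DifferentiableAt ℝ (deriv f) a)
    (hmin : ∀ y, f a ≤ f y) : 0 ≤ deriv (deriv f) a := by
  by_contra hcon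
  push_neg at hcon
  have h0 : deriv f a = 0 := by
    refine IsLocalMin.deriv_eq_zero ?_
    exact Filter.Eventually.of_forall hmin
  have hev := aux_eventually_deriv_neg f a hd2 h0 hcon
  obtain ⟨b, hb, hsub⟩ := mem_nhdsGT_iff_exists_Ioo_subset.mp hev
  set b' := (a + b) / 2 with hb'
  have hab' : a < b' := by simp [hb']; linarith [mem_Ioi.mp hb]
  have hb'b : b' < b := by simp [hb']; linarith [mem_Ioi.mp hb]
  have hanti : StrictAntiOn f (Icc a b') := by
    refine strictAntiOn_of_deriv_neg (convex_Icc a b') (fun y _ => (hd y).continuousAt.continuousWithinAt) ?_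
    intro y hy
    rw [interior_Icc] at hy
    exact hsub ⟨hy.1, lt_trans hy.2 hb'b⟩
  have := hanti (left_mem_Icc.mpr (le_of_lt hab')) (right_mem_Icc.mpr (le_of_lt hab')) hab'
  exact absurd (hmin b') (not_le.mpr this)


lemma aux_left_min_deriv (φ : ℝ → ℝ) (t : ℝ) (ht : 0 < t)
    (hd : DifferentiableAt ℝ φ t)
    (hmin : ∀ s, 0 ≤ s → s ≤ t → φ t ≤ φ s) : deriv φ t ≤ 0 := by
  have h := hd.hasDerivAt
  rw [hasDerivAt_iff_tendsto_slope] at h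
  have h2 : Tendsto (slope φ t) (𝓝[<] t) (𝓝 (deriv φ t)) :=
    h.mono_left (nhdsWithin_mono t (fun x hx => ne_of_lt hx))
  refine le_of_tendsto h2 ?_
  have hmem : Ioo 0 t ∈ 𝓝[<] t := by
    apply mem_nhdsLT_iff_exists_Ioo_subset.mpr
    exact ⟨0, ht, fun x hx => hx⟩
  filter_upwards [hmem] with s hs
  rw [slope_def_field]
  have h1 : φ s - φ t ≥ 0 := sub_nonneg.mpr (hmin s (le_of_lt hs.1) (le_of_lt hs.2))
  have h2 : s - t < 0 := sub_neg.mpr hs.2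
  exact div_nonpos_of_nonneg_of_nonpos h1 (le_of_lt h2)


lemma aux_linear_bound (φ : ℝ → ℝ) (c a : ℝ)
    (hd : ∀ x, DifferentiableAt ℝ φ x)
    (hd2 : ∀ x, DifferentiableAt ℝ (deriv φ) x)
    (hcc : ∀ x, φ x < c → deriv (deriv φ) x < 0)
    (ha : φ a < c) (hda : deriv φ a ≤ 0) :
    ∀ x, a ≤ x → φ x ≤ φ a + deriv φ a * (x - a) := by
  set d := deriv φ a with hdd
  set ψ : ℝ → ℝ := fun x => φ x - (φ a + d * (x - a)) with hψ
  have hψd : ∀ x, HasDerivAt ψ (deriv φ x - d) x := by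
    intro x
    have h1 : HasDerivAt (fun x : ℝ => φ a + d * (x - a)) d x := by
      have := (((hasDerivAt_id x).sub_const a).const_mul d).const_add (φ a)
      simpa using this
    exact (hd x).hasDerivAt.sub h1
  have hderivψ : deriv ψ = fun x => deriv φ x - d := funext fun x => (hψd x).deriv
  have hψd1 : ∀ x, DifferentiableAt ℝ ψ x := fun x => (hψd x).differentiableAt
  have hψd2 : ∀ x, DifferentiableAt ℝ (deriv ψ) x := by
    intro x; rw [hderivψ]; exact (hd2 x).sub_const d
  have hdd2 : ∀ x, deriv (deriv ψ) x = deriv (deriv φ) x := by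
    intro x; rw [hderivψ]
    exact deriv_sub_const d
  have hψa : ψ a = 0 := by simp [hψ]
  have hdψa : deriv ψ a = 0 := by rw [hderivψ]; simp [hdd]
  -- key fact: if ψ ≤ 0 at y ≥ a then φ y < c
  have hkey : ∀ y, a ≤ y → ψ y ≤ 0 → φ y < c := by
    intro y hay hψy
    have h1 : φ y ≤ φ a + d * (y - a) := by simpa [hψ, sub_nonpos] using hψy
    have h2 : d * (y - a) ≤ 0 := mul_nonpos_of_nonpos_of_nonneg hda (by linarith)
    linarith
  -- main claim : ψ ≤ 0 on [a, ∞)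
  have main : ∀ x, a ≤ x → ψ x ≤ 0 := by
    by_contra hcon
    push_neg at hcon
    obtain ⟨x₁, hax₁, hx₁⟩ := hcon
    have hax₁' : a < x₁ := by
      rcases lt_or_eq_of_le hax₁ with h | h
      · exact h
      · rw [← h] at hx₁; linarith [hψa]
    set S : Set ℝ := {x | x ∈ Icc a x₁ ∧ ∀ y ∈ Icc a x, ψ y ≤ 0} with hS
    have haS : a ∈ S := by
      refine ⟨⟨le_refl a, le_of_lt hax₁'⟩, fun y hy => ?_⟩
      have : y = a := le_antisymm hy.2 hy.1
      rw [this, hψa]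
    have hSne : S.Nonempty := ⟨a, haS⟩
    have hSbdd : BddAbove S := ⟨x₁, fun x hx => hx.1.2⟩
    set s := sSup S with hs
    have has : a ≤ s := le_csSup hSbdd haS
    have hsx₁ : s ≤ x₁ := csSup_le hSne (fun x hx => hx.1.2)
    have step1 : ∀ y, a ≤ y → y < s → ψ y ≤ 0 := by
      intro y hay hys
      obtain ⟨x, hxS, hyx⟩ := exists_lt_of_lt_csSup hSne hys
      exact hxS.2 y ⟨hay, le_of_lt hyx⟩
    have hψs : ψ s ≤ 0 := by
      rcases eq_or_lt_of_le has with h | h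
      · rw [← h, hψa]
      · have hne : (𝓝[<] s).NeBot := nhdsLT_neBot s
        have htend : Tendsto ψ (𝓝[<] s) (𝓝 (ψ s)) :=
          ((hψd1 s).continuousAt.tendsto).mono_left nhdsWithin_le_nhds
        refine le_of_tendsto htend ?_
        have hmem : Ioo a s ∈ 𝓝[<] s :=
          mem_nhdsLT_iff_exists_Ioo_subset.mpr ⟨a, h, fun z hz => hz⟩
        filter_upwards [hmem] with z hz
        exact step1 z (le_of_lt hz.1) hz.2
    have hsS : s ∈ S := by
      refine ⟨⟨has, hsx₁⟩, fun y hy => ?_⟩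
      rcases lt_or_eq_of_le hy.2 with h | h
      · exact step1 y hy.1 h
      · rw [h]; exact hψs
    have hsx₁' : s < x₁ := by
      rcases lt_or_eq_of_le hsx₁ with h | h
      · exact h
      · exfalso; rw [h] at hsS
        linarith [hsS.2 x₁ ⟨hax₁, le_refl x₁⟩]
    have dagger : ∀ x, s < x → x ≤ x₁ → ∃ y, s < y ∧ y ≤ x ∧ 0 < ψ y := by
      intro x hsx hxx₁
      have hxnS : x ∉ S := fun hxS => absurd (le_csSup hSbdd hxS) (not_le.mpr hsx)
      have hax : a ≤ x := le_trans has (le_of_lt hsx)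
      simp only [hS, Set.mem_setOf_eq, Set.mem_Icc, not_and, not_forall] at hxnS
      obtain ⟨y, hy, hyψ⟩ := hxnS ⟨hax, hxx₁⟩
      push_neg at hyψ
      refine ⟨y, ?_, hy.2, hyψ⟩
      by_contra hys
      push_neg at hys
      exact absurd (hsS.2 y ⟨hy.1, hys⟩) (not_le.mpr hyψ)
    -- deriv ψ is eventually negative to the right of s
    have E : ∀ᶠ y in 𝓝[>] s, deriv ψ y < 0 := by
      rcases eq_or_lt_of_le has with hcase | hcase
      · -- s = a
        apply aux_eventually_deriv_neg ψ s (hψd2 s)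
        · rw [← hcase, hdψa]
        · rw [hdd2, ← hcase]
          exact hcc a ha
      · -- a < s : deriv ψ s < 0 by strict antitonicity on [a,s]
        have hanti : StrictAntiOn (deriv ψ) (Icc a s) := by
          refine strictAntiOn_of_deriv_neg (convex_Icc a s)
            (fun y _ => (hψd2 y).continuousAt.continuousWithinAt) ?_
          intro y hy
          rw [interior_Icc] at hy
          rw [hdd2]
          exact hcc y (hkey y (le_of_lt hy.1) (hsS.2 y ⟨le_of_lt hy.1, le_of_lt hy.2⟩))
        have hds : deriv ψ s < 0 := by
          have := hanti (left_mem_Icc.mpr (le_of_lt hcase)) (right_mem_Icc.mpr (le_of_lt hcase)) hcase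
          rw [hdψa] at this; exact this
        have hcont : ContinuousAt (deriv ψ) s := (hψd2 s).continuousAt
        have := hcont.eventually_lt_const hds  -- maybe wrong name
        exact this.filter_mono nhdsWithin_le_nhds
    obtain ⟨b, hb, hsub⟩ := mem_nhdsGT_iff_exists_Ioo_subset.mp E
    rw [mem_Ioi] at hb
    set x := min ((s + b) / 2) x₁ with hx
    have hsx : s < x := lt_min (by linarith) hsx₁'
    have hxb : x < b := lt_of_le_of_lt (min_le_left _ _) (by linarith)
    obtain ⟨y, hsy, hyx, hψy⟩ := dagger x hsx (min_le_right _ _)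
    have hanti2 : StrictAntiOn ψ (Icc s y) := by
      refine strictAntiOn_of_deriv_neg (convex_Icc s y)
        (fun z _ => (hψd1 z).continuousAt.continuousWithinAt) ?_
      intro z hz
      rw [interior_Icc] at hz
      exact hsub ⟨hz.1, lt_of_lt_of_le hz.2 (le_of_lt (lt_of_le_of_lt hyx hxb))⟩
    have := hanti2 (left_mem_Icc.mpr (le_of_lt hsy)) (right_mem_Icc.mpr (le_of_lt hsy)) hsy
    linarith [hψs]
  intro x hax
  have := main x hax
  simp only [hψ, sub_nonpos] at this
  exact this


lemma aux_no_neg_slope (φ : ℝ → ℝ) (c a : ℝ)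
    (hd : ∀ x, DifferentiableAt ℝ φ x)
    (hd2 : ∀ x, DifferentiableAt ℝ (deriv φ) x)
    (hcc : ∀ x, φ x < c → deriv (deriv φ) x < 0)
    (hpos : ∀ x, 0 < φ x)
    (ha : φ a < c) (hda : deriv φ a < 0) : False := by
  have hq : 0 < (φ a + 1) / (-(deriv φ a)) := div_pos (by linarith [hpos a]) (by linarith)
  have hax : a ≤ a + (φ a + 1) / (-(deriv φ a)) := by linarith
  have hb := aux_linear_bound φ c a hd hd2 hcc ha (le_of_lt hda) _ hax
  have hcalc : deriv φ a * ((a + (φ a + 1) / (-(deriv φ a))) - a) = -(φ a + 1) := by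
    have hne : deriv φ a ≠ 0 := ne_of_lt hda
    rw [add_sub_cancel_left, div_neg, mul_neg, mul_div_assoc', mul_comm, mul_div_assoc,
      div_self hne, mul_one]
  rw [hcalc] at hb
  linarith [hpos (a + (φ a + 1) / (-(deriv φ a)))]


lemma aux_no_zero_slope (φ : ℝ → ℝ) (c a : ℝ)
    (hd : ∀ x, DifferentiableAt ℝ φ x)
    (hd2 : ∀ x, DifferentiableAt ℝ (deriv φ) x)
    (hcc : ∀ x, φ x < c → deriv (deriv φ) x < 0)
    (hpos : ∀ x, 0 < φ x)
    (ha : φ a < c) (hda : deriv φ a = 0) : False := by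
  have hbound : ∀ x, a ≤ x → φ x ≤ φ a := by
    intro x hax
    have := aux_linear_bound φ c a hd hd2 hcc ha (le_of_eq hda) x hax
    rw [hda] at this; linarith
  have hlt : ∀ x, a ≤ x → φ x < c := fun x hax => lt_of_le_of_lt (hbound x hax) ha
  have hdnn : ∀ x, a < x → 0 ≤ deriv φ x := by
    intro x hax
    by_contra hcon
    push_neg at hcon
    exact aux_no_neg_slope φ c x hd hd2 hcc hpos (hlt x (le_of_lt hax)) hcon
  have hmono : MonotoneOn φ (Ici a) := by
    refine monotoneOn_of_deriv_nonneg (convex_Ici a)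
      (fun y _ => (hd y).continuousAt.continuousWithinAt)
      (fun y hy => (hd y).differentiableWithinAt) ?_
    intro y hy
    rw [interior_Ici] at hy
    exact hdnn y hy
  have hconst : ∀ x, a < x → φ x = φ a :=
    fun x hax => le_antisymm (hbound x (le_of_lt hax))
      (hmono (self_mem_Ici) (mem_Ici.mpr (le_of_lt hax)) (le_of_lt hax))
  set x₁ := a + 1 with hx₁
  have hd0 : ∀ y, a < y → deriv φ y = 0 := by
    intro y hay
    have hev : φ =ᶠ[𝓝 y] (fun _ => φ a) := by
      filter_upwards [Ioi_mem_nhds hay] with z hz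
      exact hconst z hz
    rw [hev.deriv_eq]
    exact deriv_const y (φ a)
  have hd0ev : deriv φ =ᶠ[𝓝 x₁] (fun _ => (0:ℝ)) := by
    filter_upwards [Ioi_mem_nhds (show a < x₁ by rw [hx₁]; linarith)] with z hz
    exact hd0 z hz
  have : deriv (deriv φ) x₁ = 0 := by
    rw [hd0ev.deriv_eq]
    exact deriv_const x₁ 0
  have hlt₁ : φ x₁ < c := hlt x₁ (by rw [hx₁]; linarith)
  linarith [hcc x₁ hlt₁]


lemma aux_steady_lower (g ustar : ℝ → ℝ) (c : ℝ) (hc : 0 < c)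
    (hgc : ∀ x, c ≤ g x)
    (hd : ∀ x, DifferentiableAt ℝ ustar x)
    (hd2 : ∀ x, DifferentiableAt ℝ (deriv ustar) x)
    (hpos : ∀ x, 0 < ustar x)
    (heq : ∀ x, deriv (deriv ustar) x + ustar x * (g x - ustar x) = 0) :
    ∀ x, c ≤ ustar x := by
  have hcc : ∀ x, ustar x < c → deriv (deriv ustar) x < 0 := by
    intro x hx
    nlinarith [heq x, hpos x, hgc x]
  intro x
  by_contra hcon
  push_neg at hcon
  rcases lt_trichotomy (deriv ustar x) 0 with h | h | h
  · exact aux_no_neg_slope ustar c x hd hd2 hcc hpos hcon h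
  · exact aux_no_zero_slope ustar c x hd hd2 hcc hpos hcon h
  · -- reflect
    have hdneg : ∀ y, DifferentiableAt ℝ (fun z => ustar (-z)) y := by
      intro y
      exact (hd (-y)).comp y (differentiable_neg y)
    have hderiv_refl : deriv (fun z => ustar (-z)) = fun y => -(deriv ustar (-y)) := by
      funext y
      exact deriv_comp_neg ustar y
    have hd2neg : ∀ y, DifferentiableAt ℝ (deriv (fun z => ustar (-z))) y := by
      intro y
      rw [hderiv_refl]
      exact ((hd2 (-y)).comp y (differentiable_neg y)).neg
    have hdd_refl : ∀ y, deriv (deriv (fun z => ustar (-z))) y = deriv (deriv ustar) (-y) := by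
      intro y
      rw [hderiv_refl]
      rw [deriv.fun_neg]  -- deriv (fun y => -(h y)) = - deriv h y
      rw [deriv_comp_neg (deriv ustar) y]
      ring
    refine aux_no_neg_slope (fun z => ustar (-z)) c (-x) hdneg hd2neg ?_ (fun y => hpos (-y)) (by simpa using hcon) ?_
    · intro y hy
      rw [hdd_refl y]
      exact hcc (-y) hy
    · rw [hderiv_refl]
      simpa using h


lemma aux_max_principle (z h : ℝ → ℝ → ℝ) (T C K : ℝ) (hT : 0 < T)
    (hcontz : ContinuousOn (fun p : ℝ × ℝ => z p.1 p.2) {p : ℝ × ℝ | 0 ≤ p.2})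
    (hbddz : ∀ x t, 0 ≤ t → t ≤ T → |z x t| ≤ C)
    (hregx1 : ∀ x t, 0 < t → t ≤ T → DifferentiableAt ℝ (fun y => z y t) x)
    (hregx2 : ∀ x t, 0 < t → t ≤ T → DifferentiableAt ℝ (deriv fun y => z y t) x)
    (hregt : ∀ x t, 0 < t → t ≤ T → DifferentiableAt ℝ (fun s => z x s) t)
    (hineq : ∀ x t, 0 < t → t ≤ T →
      deriv (deriv fun y => z y t) x + h x t * z x t ≤ deriv (fun s => z x s) t)
    (hK : ∀ x t, 0 < t → t ≤ T → h x t ≤ K)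
    (hinit : ∀ x, 0 ≤ z x 0) :
    ∀ x t, 0 ≤ t → t ≤ T → 0 ≤ z x t := by
  have hC : 0 ≤ C := le_trans (abs_nonneg _) (hbddz 0 0 le_rfl (le_of_lt hT))
  obtain ⟨lam, hlam_pos, hKlam⟩ : ∃ lam : ℝ, 0 < lam ∧ K ≤ lam - 1 := by
    refine ⟨max K 0 + 1, ?_, ?_⟩
    · have := le_max_right K 0; linarith
    · have := le_max_left K 0; linarith
  have claim : ∀ ε : ℝ, 0 < ε → ∀ x t, 0 ≤ t → t ≤ T →
      0 < z x t * Real.exp (-lam * t) + ε * (1 + x ^ 2) * Real.exp (2 * t) := by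
    intro ε hε
    by_contra hcon
    push_neg at hcon
    obtain ⟨x₀, t₀, ht₀0, ht₀T, hw₀⟩ := hcon
    -- positivity far out
    have hfar : ∀ x t, 0 ≤ t → t ≤ T → C / ε ≤ x ^ 2 →
        0 < z x t * Real.exp (-lam * t) + ε * (1 + x ^ 2) * Real.exp (2 * t) := by
      intro x t ht0 htT hx
      have he1 : Real.exp (-lam * t) ≤ 1 := by
        rw [Real.exp_le_one_iff]
        nlinarith
      have he1' : 0 < Real.exp (-lam * t) := Real.exp_pos _
      have he2 : 1 ≤ Real.exp (2 * t) := by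
        rw [Real.one_le_exp_iff]
        nlinarith
      have hz1 : -C ≤ z x t := by
        have := abs_le.mp (hbddz x t ht0 htT); linarith [this.1]
      have hzz : -C ≤ z x t * Real.exp (-lam * t) := by
        rcases le_or_gt 0 (z x t) with hz | hz
        · nlinarith
        · nlinarith
      have h1 : ε * (C / ε) = C := by field_simp
      have hb : C + ε ≤ ε * (1 + x ^ 2) * Real.exp (2 * t) := by
        have hT1 : ε * (C / ε) ≤ ε * x ^ 2 := mul_le_mul_of_nonneg_left hx hε.le
        have hT2 : 0 ≤ ε * (1 + x ^ 2) * (Real.exp (2 * t) - 1) :=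
          mul_nonneg (by nlinarith [sq_nonneg x]) (by linarith)
        nlinarith
      nlinarith
    -- the compact box
    have hR2 : (0:ℝ) ≤ C / ε := div_nonneg hC (le_of_lt hε)
    have hRfar : ∀ x, Real.sqrt (C / ε) + 1 ≤ |x| → C / ε ≤ x ^ 2 := by
      intro x hx
      have h1 : Real.sqrt (C / ε) ≤ |x| := by linarith
      have h2 : C / ε = Real.sqrt (C / ε) ^ 2 := (Real.sq_sqrt hR2).symm
      rw [h2]
      have h3 : 0 ≤ Real.sqrt (C / ε) := Real.sqrt_nonneg _
      calc Real.sqrt (C / ε) ^ 2 ≤ |x| ^ 2 := by nlinarith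
        _ = x ^ 2 := sq_abs x
    obtain ⟨R, hRpos, hRbig⟩ : ∃ R : ℝ, 0 < R ∧ ∀ x, R ≤ |x| → C / ε ≤ x ^ 2 :=
      ⟨Real.sqrt (C / ε) + 1, by positivity, hRfar⟩
    have hx₀R : |x₀| < R := by
      by_contra hcc
      push_neg at hcc
      exact absurd (hfar x₀ t₀ ht₀0 ht₀T (hRbig x₀ hcc)) (not_lt.mpr hw₀)
    have hScompact : IsCompact (Icc (-R) R ×ˢ Icc 0 T) := isCompact_Icc.prod isCompact_Icc
    have hSsub : (Icc (-R) R ×ˢ Icc 0 T : Set (ℝ × ℝ)) ⊆ {p : ℝ × ℝ | 0 ≤ p.2} :=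
      fun p hp => hp.2.1
    have hwcont : ContinuousOn
        (fun p : ℝ × ℝ => z p.1 p.2 * Real.exp (-lam * p.2) + ε * (1 + p.1 ^ 2) * Real.exp (2 * p.2))
        (Icc (-R) R ×ˢ Icc 0 T) := by
      apply ContinuousOn.add
      · exact (hcontz.mono hSsub).mul
          (((Real.continuous_exp.comp (continuous_const.mul continuous_snd))).continuousOn)
      · exact ((continuous_const.mul (continuous_const.add ((continuous_pow 2).comp continuous_fst))).mul
          (Real.continuous_exp.comp (continuous_const.mul continuous_snd))).continuousOn
    have hx₀mem : (x₀, t₀) ∈ (Icc (-R) R ×ˢ Icc 0 T : Set (ℝ × ℝ)) := by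
      have := abs_lt.mp hx₀R
      exact ⟨⟨le_of_lt this.1, le_of_lt this.2⟩, ht₀0, ht₀T⟩
    obtain ⟨⟨xs, ts⟩, hmem, hmin⟩ := hScompact.exists_isMinOn ⟨(x₀, t₀), hx₀mem⟩ hwcont
    have hminle : ∀ p ∈ (Icc (-R) R ×ˢ Icc 0 T : Set (ℝ × ℝ)),
        z xs ts * Real.exp (-lam * ts) + ε * (1 + xs ^ 2) * Real.exp (2 * ts) ≤
        z p.1 p.2 * Real.exp (-lam * p.2) + ε * (1 + p.1 ^ 2) * Real.exp (2 * p.2) :=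
      fun p hp => hmin hp
    have hws : z xs ts * Real.exp (-lam * ts) + ε * (1 + xs ^ 2) * Real.exp (2 * ts) ≤ 0 :=
      le_trans (hminle (x₀, t₀) hx₀mem) hw₀
    have hts0 : 0 ≤ ts := hmem.2.1
    have htsT : ts ≤ T := hmem.2.2
    have hxsR : xs ∈ Icc (-R) R := hmem.1
    -- ts > 0
    have hts_pos : 0 < ts := by
      rcases lt_or_eq_of_le hts0 with h | h
      · exact h
      · exfalso
        rw [← h] at hws
        simp only [mul_zero, Real.exp_zero, mul_one] at hws
        nlinarith [hinit xs, Real.exp_pos (-lam * 0), hε, sq_nonneg xs]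
    -- global min in x
    have hxmin : ∀ y : ℝ,
        z xs ts * Real.exp (-lam * ts) + ε * (1 + xs ^ 2) * Real.exp (2 * ts) ≤
        z y ts * Real.exp (-lam * ts) + ε * (1 + y ^ 2) * Real.exp (2 * ts) := by
      intro y
      rcases le_or_gt (|y|) R with hy | hy
      · have := abs_le.mp hy
        exact hminle (y, ts) ⟨⟨this.1, this.2⟩, hts0, htsT⟩
      · have := hfar y ts hts0 htsT (hRbig y (le_of_lt hy))
        linarith
    -- time min
    have htmin : ∀ s, 0 ≤ s → s ≤ ts →
        z xs ts * Real.exp (-lam * ts) + ε * (1 + xs ^ 2) * Real.exp (2 * ts) ≤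
        z xs s * Real.exp (-lam * s) + ε * (1 + xs ^ 2) * Real.exp (2 * s) := by
      intro s hs0 hsts
      exact hminle (xs, s) ⟨hxsR, hs0, le_trans hsts htsT⟩
    -- derivative computations in x
    have hfd : ∀ y : ℝ, HasDerivAt
        (fun y => z y ts * Real.exp (-lam * ts) + ε * (1 + y ^ 2) * Real.exp (2 * ts))
        (deriv (fun y => z y ts) y * Real.exp (-lam * ts) + ε * (2 * y) * Real.exp (2 * ts)) y := by
      intro y
      have h1 : HasDerivAt (fun y => z y ts) (deriv (fun y => z y ts) y) y :=
        (hregx1 y ts hts_pos htsT).hasDerivAt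
      have h2 : HasDerivAt (fun y : ℝ => ε * (1 + y ^ 2) * Real.exp (2 * ts))
          (ε * (2 * y) * Real.exp (2 * ts)) y := by
        have h3 : HasDerivAt (fun y : ℝ => (1 + y ^ 2 : ℝ)) (2 * y) y := by
          have := ((hasDerivAt_pow 2 y).const_add (1:ℝ))
          simpa using this
        exact ((h3.const_mul ε).mul_const (Real.exp (2 * ts)))
      exact (h1.mul_const _).add h2
    have hderiv_x : deriv (fun y => z y ts * Real.exp (-lam * ts) + ε * (1 + y ^ 2) * Real.exp (2 * ts))
        = fun y => deriv (fun y => z y ts) y * Real.exp (-lam * ts) + ε * (2 * y) * Real.exp (2 * ts) :=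
      funext fun y => (hfd y).deriv
    have hsecond : HasDerivAt (fun y => deriv (fun y => z y ts) y * Real.exp (-lam * ts) + ε * (2 * y) * Real.exp (2 * ts))
        (deriv (deriv fun y => z y ts) xs * Real.exp (-lam * ts) + ε * 2 * Real.exp (2 * ts)) xs := by
      have h1 : HasDerivAt (deriv fun y => z y ts) (deriv (deriv fun y => z y ts) xs) xs :=
        (hregx2 xs ts hts_pos htsT).hasDerivAt
      have h2 : HasDerivAt (fun y : ℝ => ε * (2 * y) * Real.exp (2 * ts)) (ε * 2 * Real.exp (2 * ts)) xs := by
        have h3 : HasDerivAt (fun y : ℝ => ε * (2 * y)) (ε * 2) xs := by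
          simpa using ((hasDerivAt_id xs).const_mul 2).const_mul ε
        exact h3.mul_const _
      exact (h1.mul_const _).add h2
    have hdd2x : deriv (deriv (fun y => z y ts * Real.exp (-lam * ts) + ε * (1 + y ^ 2) * Real.exp (2 * ts))) xs
        = deriv (deriv fun y => z y ts) xs * Real.exp (-lam * ts) + ε * 2 * Real.exp (2 * ts) := by
      rw [hderiv_x]
      exact hsecond.deriv
    have hA1 : 0 ≤ deriv (deriv fun y => z y ts) xs * Real.exp (-lam * ts) + ε * 2 * Real.exp (2 * ts) := by
      rw [← hdd2x]
      apply aux_min_second_deriv _ xs (fun y => (hfd y).differentiableAt)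
      · rw [hderiv_x]
        exact hsecond.differentiableAt
      · exact hxmin
    -- time derivative
    have hft : HasDerivAt (fun s => z xs s * Real.exp (-lam * s) + ε * (1 + xs ^ 2) * Real.exp (2 * s))
        (deriv (fun s => z xs s) ts * Real.exp (-lam * ts) + z xs ts * (Real.exp (-lam * ts) * -lam)
          + ε * (1 + xs ^ 2) * (Real.exp (2 * ts) * 2)) ts := by
      have h1 : HasDerivAt (fun s => z xs s) (deriv (fun s => z xs s) ts) ts :=
        (hregt xs ts hts_pos htsT).hasDerivAt
      have h2 : HasDerivAt (fun s : ℝ => Real.exp (-lam * s)) (Real.exp (-lam * ts) * -lam) ts := by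
        have := ((hasDerivAt_id ts).const_mul (-lam)).exp
        simpa [mul_comm] using this
      have h3 : HasDerivAt (fun s : ℝ => Real.exp (2 * s)) (Real.exp (2 * ts) * 2) ts := by
        have := ((hasDerivAt_id ts).const_mul (2:ℝ)).exp
        simpa [mul_comm] using this
      exact (h1.mul h2).add (h3.const_mul _)
    have hA2 : deriv (fun s => z xs s) ts * Real.exp (-lam * ts) + z xs ts * (Real.exp (-lam * ts) * -lam)
          + ε * (1 + xs ^ 2) * (Real.exp (2 * ts) * 2) ≤ 0 := by
      rw [← hft.deriv]
      exact aux_left_min_deriv _ ts hts_pos hft.differentiableAt htmin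
    -- combine
    have hIQ := hineq xs ts hts_pos htsT
    have hHK := hK xs ts hts_pos htsT
    have hE1 : 0 < Real.exp (-lam * ts) := Real.exp_pos _
    have hE2 : 0 < Real.exp (2 * ts) := Real.exp_pos _
    have hIQ' : (deriv (deriv fun y => z y ts) xs) * Real.exp (-lam * ts)
        + h xs ts * (z xs ts * Real.exp (-lam * ts))
        ≤ deriv (fun s => z xs s) ts * Real.exp (-lam * ts) := by
      have h2 := mul_le_mul_of_nonneg_right hIQ (le_of_lt hE1)
      linarith [h2]
    have hP : z xs ts * Real.exp (-lam * ts) ≤ -(ε * (1 + xs ^ 2) * Real.exp (2 * ts)) := by linarith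
    have hpos2 : 0 < ε * (1 + xs ^ 2) * Real.exp (2 * ts) := by nlinarith [sq_nonneg xs, mul_pos hε hE2]
    have hPneg : z xs ts * Real.exp (-lam * ts) < 0 := by linarith
    have hprod : 0 ≤ (lam - 1 - h xs ts) * (-(z xs ts * Real.exp (-lam * ts))) :=
      mul_nonneg (by linarith) (by linarith)
    nlinarith [mul_pos hε hE2, mul_nonneg (mul_nonneg hε.le (sq_nonneg xs)) hE2.le, hprod, hA1, hA2, hIQ', hP]
  -- conclude
  intro x t ht0 htT
  by_contra hcon
  push_neg at hcon
  have hE1 : 0 < Real.exp (-lam * t) := Real.exp_pos _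
  have hE2 : 0 < Real.exp (2 * t) := Real.exp_pos _
  have hx2 : (0:ℝ) < 1 + x ^ 2 := by nlinarith [sq_nonneg x]
  set ε := (-(z x t * Real.exp (-lam * t))) / (2 * (1 + x ^ 2) * Real.exp (2 * t)) with hε
  have hzneg : z x t * Real.exp (-lam * t) < 0 := mul_neg_of_neg_of_pos hcon hE1
  have hεpos : 0 < ε := by
    rw [hε]
    apply div_pos (by linarith) (by positivity)
  have := claim ε hεpos x t ht0 htT
  rw [hε] at this
  have hcalc : -(z x t * Real.exp (-lam * t)) / (2 * (1 + x ^ 2) * Real.exp (2 * t)) * (1 + x ^ 2) * Real.exp (2 * t)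
      = -(z x t * Real.exp (-lam * t)) / 2 := by
    field_simp
  rw [hcalc] at this
  linarith


lemma aux_exp_affine (a t : ℝ) : HasDerivAt (fun s : ℝ => Real.exp (a * s)) (a * Real.exp (a * t)) t := by
  have := ((hasDerivAt_id t).const_mul a).exp
  simpa [mul_comm] using this


lemma aux_contdiff_facts (u : ℝ → ℝ) (hu : ContDiff ℝ 2 u) :
    (∀ x, DifferentiableAt ℝ u x) ∧ (∀ x, DifferentiableAt ℝ (deriv u) x) ∧
      Continuous (deriv (deriv u)) := by
  have h2 : ContDiff ℝ ((1:ℕ∞) + 1) u := by norm_num; exact hu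
  rw [contDiff_succ_iff_deriv] at h2
  have h3 : ContDiff ℝ ((0:ℕ∞) + 1) (deriv u) := by norm_num; exact h2.2.2
  rw [contDiff_succ_iff_deriv] at h3
  exact ⟨fun x => h2.1.differentiableAt, fun x => h3.1.differentiableAt,
    h3.2.2.continuous⟩


lemma aux_g_cont (g u : ℝ → ℝ) (hpos : ∀ x, 0 < u x) (hu : ContDiff ℝ 2 u)
    (heq : ∀ x : ℝ, deriv (deriv u) x + u x * (g x - u x) = 0) : Continuous g := by
  obtain ⟨hd1, hd2, hcont2⟩ := aux_contdiff_facts u hu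
  have hgeq : g = fun x => u x - deriv (deriv u) x / u x := by
    funext x
    have h := heq x
    have hne : u x ≠ 0 := ne_of_gt (hpos x)
    field_simp
    nlinarith [h]
  rw [hgeq]
  exact (hu.continuous).sub (hcont2.div hu.continuous (fun x => ne_of_gt (hpos x)))


lemma aux_g_bdd (g : ℝ → ℝ) (hg : BohrAlmostPeriodic g) (hgc : Continuous g) :
    ∃ K, ∀ x, g x ≤ K := by
  obtain ⟨L, hL, hap⟩ := hg 1 one_pos
  obtain ⟨K₀, hK₀⟩ := (isCompact_Icc.image_of_continuousOn (hgc.continuousOn)).bddAbove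
  refine ⟨K₀ + 1, fun x => ?_⟩
  obtain ⟨s, hs, hsap⟩ := hap (-x)
  have h1 : x + s ∈ Icc (0:ℝ) L := ⟨by linarith [hs.1], by linarith [hs.2]⟩
  have h2 : g (x + s) ≤ K₀ := hK₀ (mem_image_of_mem g h1)
  have h3 : |g (x + s) - g x| < 1 := hsap x
  have := abs_lt.mp h3
  linarith [this.1]


theorem cauchy_problem_converges_to_steady_state (g ustar u₀ : ℝ → ℝ)
    (hg : BohrAlmostPeriodic g) (hginf : ∃ m > (0 : ℝ), ∀ x : ℝ, m ≤ g x)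
    (hstar : IsBddPosSteadyState g ustar)
    (hu₀c : Continuous u₀) (m M : ℝ) (hm : 0 < m)
    (hu₀ : ∀ x : ℝ, m ≤ u₀ x ∧ u₀ x ≤ M)
    (u : ℝ → ℝ → ℝ)
    (hbdd : ∃ C : ℝ, ∀ x t : ℝ, 0 ≤ t → |u x t| ≤ C)
    (hcont : ContinuousOn (fun p : ℝ × ℝ => u p.1 p.2) {p : ℝ × ℝ | 0 ≤ p.2})
    (hreg_x : ∀ x : ℝ, ∀ t > (0 : ℝ), DifferentiableAt ℝ (fun y => u y t) x ∧
      DifferentiableAt ℝ (deriv fun y => u y t) x)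
    (hreg_t : ∀ x : ℝ, ∀ t > (0 : ℝ), DifferentiableAt ℝ (fun s => u x s) t)
    (hpde : ∀ x : ℝ, ∀ t > (0 : ℝ),
      deriv (fun s => u x s) t = deriv (deriv fun y => u y t) x + u x t * (g x - u x t))
    (hinit : ∀ x : ℝ, u x 0 = u₀ x) :
    ∀ ε > (0 : ℝ), ∃ T : ℝ, ∀ t ≥ T, ∀ x : ℝ, |u x t - ustar x| < ε := by
  obtain ⟨c, hc, hgc⟩ := hginf
  obtain ⟨hsm, ⟨Cs, hCsabs⟩, hspos, hseq⟩ := hstar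
  obtain ⟨Cu, hCu⟩ := hbdd
  obtain ⟨hsd1, hsd2, _⟩ := aux_contdiff_facts ustar hsm
  have hgcont : Continuous g := aux_g_cont g ustar hspos hsm hseq
  obtain ⟨Kg, hKg⟩ := aux_g_bdd g hg hgcont
  have hlow : ∀ x, c ≤ ustar x := aux_steady_lower g ustar c hc hgc hsd1 hsd2 hspos hseq
  have hCs : ∀ x, ustar x ≤ Cs := fun x => le_trans (le_abs_self _) (hCsabs x)
  have hCspos : 0 < Cs := lt_of_lt_of_le hc (le_trans (hlow 0) (hCs 0))
  have hCunn : 0 ≤ Cu := le_trans (abs_nonneg _) (hCu 0 0 le_rfl)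
  have hCuup : ∀ x t, 0 ≤ t → u x t ≤ Cu := fun x t ht => le_trans (le_abs_self _) (hCu x t ht)
  have hCudn : ∀ x t, 0 ≤ t → -Cu ≤ u x t := fun x t ht => neg_le_of_abs_le (hCu x t ht)
  have hM : 0 < M := lt_of_lt_of_le hm (le_trans (hu₀ 0).1 (hu₀ 0).2)
  -- constants
  obtain ⟨A, hA0, hcA⟩ : ∃ A : ℝ, 0 ≤ A ∧ M ≤ c * (1 + A) := by
    refine ⟨M / c, by positivity, ?_⟩
    rw [mul_add, mul_one, mul_div_cancel₀ _ (ne_of_gt hc)]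
    linarith
  obtain ⟨W₀, hW₀pos, hW₀half, hW₀m⟩ : ∃ W₀ : ℝ, 0 < W₀ ∧ W₀ ≤ 1/2 ∧ Cs * W₀ ≤ m := by
    refine ⟨min (m / (Cs + 1)) (1/2), lt_min (by positivity) (by norm_num), min_le_right _ _, ?_⟩
    have h1 : Cs * min (m / (Cs + 1)) (1/2) ≤ Cs * (m / (Cs + 1)) :=
      mul_le_mul_of_nonneg_left (min_le_left _ _) (le_of_lt hCspos)
    have h2 : Cs * (m / (Cs + 1)) ≤ m := by
      rw [mul_div_assoc'] 
      rw [div_le_iff₀ (by linarith)]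
      nlinarith
    linarith
  have hW₀1 : W₀ ≤ 1 := by linarith
  -- upper comparison
  have hupper : ∀ x t, 0 ≤ t →
      u x t ≤ ustar x * (1 + A * Real.exp (-c * t)) := by
    intro x₀ t₀ ht₀
    have hz := aux_max_principle
      (fun x t => ustar x * (1 + A * Real.exp (-c * t)) - u x t)
      (fun x t => g x - u x t - ustar x * (1 + A * Real.exp (-c * t)))
      (t₀ + 1) (Cs * (1 + A) + Cu) (Kg + Cu) (by linarith)
      ?_ ?_ ?_ ?_ ?_ ?_ ?_ ?_ x₀ t₀ ht₀ (by linarith)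
    · have hz' : 0 ≤ ustar x₀ * (1 + A * Real.exp (-c * t₀)) - u x₀ t₀ := hz
      linarith
    · -- continuity
      apply ContinuousOn.sub
      · exact (((hsm.continuous.comp continuous_fst).mul
          (continuous_const.add (continuous_const.mul
            (Real.continuous_exp.comp (continuous_const.mul continuous_snd))))).continuousOn)
      · exact hcont
    · -- boundedness
      intro x t ht0 htT
      beta_reduce
      have hE : 0 < Real.exp (-c * t) := Real.exp_pos _
      have hE1 : Real.exp (-c * t) ≤ 1 := by
        rw [Real.exp_le_one_iff]; nlinarith
      have hV1 : 1 ≤ 1 + A * Real.exp (-c * t) := by nlinarith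
      have hVA : 1 + A * Real.exp (-c * t) ≤ 1 + A := by nlinarith
      have h1 : 0 < ustar x := hspos x
      have h2 : ustar x * (1 + A * Real.exp (-c * t)) ≤ Cs * (1 + A) := by
        apply mul_le_mul (hCs x) hVA (by linarith) (le_of_lt hCspos)
      have h3 : 0 ≤ ustar x * (1 + A * Real.exp (-c * t)) := by positivity
      have h4 := hCu x t ht0
      rw [abs_le] at h4 ⊢
      constructor
      · linarith [h4.2]
      · linarith [h4.1]
    · -- x-differentiability first order
      intro x t ht htT
      exact ((hsd1 x).mul_const _).sub (hreg_x x t ht).1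
    · -- x-differentiability second order
      intro x t ht htT
      have hder : (deriv fun y => ustar y * (1 + A * Real.exp (-c * t)) - u y t)
          = fun y => deriv ustar y * (1 + A * Real.exp (-c * t)) - deriv (fun y => u y t) y := by
        funext y
        exact (((hsd1 y).hasDerivAt.mul_const _).sub (hreg_x y t ht).1.hasDerivAt).deriv
      rw [hder]
      exact ((hsd2 x).mul_const _).sub (hreg_x x t ht).2
    · -- t-differentiability
      intro x t ht htT
      exact ((((aux_exp_affine (-c) t).const_mul A).const_add 1).const_mul
        (ustar x)).differentiableAt.sub (hreg_t x t ht)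
    · -- differential inequality
      intro x t ht htT
      beta_reduce
      have hder : (deriv fun y => ustar y * (1 + A * Real.exp (-c * t)) - u y t)
          = fun y => deriv ustar y * (1 + A * Real.exp (-c * t)) - deriv (fun y => u y t) y := by
        funext y
        exact (((hsd1 y).hasDerivAt.mul_const _).sub (hreg_x y t ht).1.hasDerivAt).deriv
      have hdd : deriv (deriv fun y => ustar y * (1 + A * Real.exp (-c * t)) - u y t) x
          = deriv (deriv ustar) x * (1 + A * Real.exp (-c * t)) - deriv (deriv fun y => u y t) x := by
        rw [hder]
        exact (((hsd2 x).hasDerivAt.mul_const _).sub (hreg_x x t ht).2.hasDerivAt).deriv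
      have hdt : deriv (fun s => ustar x * (1 + A * Real.exp (-c * s)) - u x s) t
          = ustar x * (A * (-c * Real.exp (-c * t))) - deriv (fun s => u x s) t := by
        exact (((((aux_exp_affine (-c) t).const_mul A).const_add 1).const_mul
          (ustar x)).sub (hreg_t x t ht).hasDerivAt).deriv
      rw [hdd, hdt, hpde x t ht]
      have hseq' : deriv (deriv ustar) x = -(ustar x * (g x - ustar x)) := by
        linarith [hseq x]
      rw [hseq']
      have hE : 0 < Real.exp (-c * t) := Real.exp_pos _
      have hsx := hspos x
      have hlx := hlow x
      have hkey : 0 ≤ ustar x * (A * Real.exp (-c * t)) *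
          (ustar x * (1 + A * Real.exp (-c * t)) - c) := by
        apply mul_nonneg (by positivity)
        nlinarith [mul_nonneg (mul_nonneg hsx.le hA0) hE.le]
      nlinarith [hkey]
    · -- h bounded above
      intro x t ht htT
      beta_reduce
      have hE : 0 < Real.exp (-c * t) := Real.exp_pos _
      have h3 : 0 < ustar x * (1 + A * Real.exp (-c * t)) := by
        nlinarith [mul_nonneg (mul_nonneg (hspos x).le hA0) hE.le, hspos x]
      have h4 := hCudn x t (le_of_lt ht)
      have h5 := hKg x
      linarith
    · -- initial data
      intro x
      beta_reduce
      rw [hinit x]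
      have hE : Real.exp (-c * 0) = 1 := by norm_num
      rw [hE]
      have h1 : c * (1 + A) ≤ ustar x * (1 + A) := by
        apply mul_le_mul_of_nonneg_right (hlow x) (by linarith)
      have h2 := (hu₀ x).2
      simp only [mul_one]
      nlinarith
  -- lower comparison
  have hlower : ∀ x t, 0 ≤ t →
      ustar x * (1 - (1 - W₀) * Real.exp (-(c * W₀) * t)) ≤ u x t := by
    intro x₀ t₀ ht₀
    have hz := aux_max_principle
      (fun x t => u x t - ustar x * (1 - (1 - W₀) * Real.exp (-(c * W₀) * t)))
      (fun x t => g x - u x t - ustar x * (1 - (1 - W₀) * Real.exp (-(c * W₀) * t)))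
      (t₀ + 1) (Cu + Cs) (Kg + Cu) (by linarith)
      ?_ ?_ ?_ ?_ ?_ ?_ ?_ ?_ x₀ t₀ ht₀ (by linarith)
    · have hz' : 0 ≤ u x₀ t₀ - ustar x₀ * (1 - (1 - W₀) * Real.exp (-(c * W₀) * t₀)) := hz
      linarith
    · -- continuity
      apply ContinuousOn.sub
      · exact hcont
      · exact (((hsm.continuous.comp continuous_fst).mul
          (continuous_const.sub (continuous_const.mul
            (Real.continuous_exp.comp (continuous_const.mul continuous_snd))))).continuousOn)
    · -- boundedness
      intro x t ht0 htT
      beta_reduce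
      have hE : 0 < Real.exp (-(c * W₀) * t) := Real.exp_pos _
      have hE1 : Real.exp (-(c * W₀) * t) ≤ 1 := by
        rw [Real.exp_le_one_iff]; nlinarith [mul_pos hc hW₀pos]
      have hW1 : 1 - (1 - W₀) * Real.exp (-(c * W₀) * t) ≤ 1 := by nlinarith
      have hWW : W₀ ≤ 1 - (1 - W₀) * Real.exp (-(c * W₀) * t) := by nlinarith
      have h1 : 0 < ustar x := hspos x
      have h2 : 0 ≤ ustar x * (1 - (1 - W₀) * Real.exp (-(c * W₀) * t)) := by nlinarith
      have h3 : ustar x * (1 - (1 - W₀) * Real.exp (-(c * W₀) * t)) ≤ Cs := by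
        calc ustar x * (1 - (1 - W₀) * Real.exp (-(c * W₀) * t)) ≤ ustar x * 1 :=
              mul_le_mul_of_nonneg_left hW1 h1.le
          _ ≤ Cs := by rw [mul_one]; exact hCs x
      have h4 := hCu x t ht0
      rw [abs_le] at h4 ⊢
      constructor
      · linarith [h4.1]
      · linarith [h4.2]
    · -- x-differentiability first order
      intro x t ht htT
      exact (hreg_x x t ht).1.sub ((hsd1 x).mul_const _)
    · -- x-differentiability second order
      intro x t ht htT
      have hder : (deriv fun y => u y t - ustar y * (1 - (1 - W₀) * Real.exp (-(c * W₀) * t)))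
          = fun y => deriv (fun y => u y t) y - deriv ustar y * (1 - (1 - W₀) * Real.exp (-(c * W₀) * t)) := by
        funext y
        exact ((hreg_x y t ht).1.hasDerivAt.sub ((hsd1 y).hasDerivAt.mul_const _)).deriv
      rw [hder]
      exact (hreg_x x t ht).2.sub ((hsd2 x).mul_const _)
    · -- t-differentiability
      intro x t ht htT
      exact (hreg_t x t ht).sub
        ((((aux_exp_affine (-(c * W₀)) t).const_mul (1 - W₀)).const_sub 1).const_mul
          (ustar x)).differentiableAt
    · -- differential inequality
      intro x t ht htT
      beta_reduce
      have hder : (deriv fun y => u y t - ustar y * (1 - (1 - W₀) * Real.exp (-(c * W₀) * t)))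
          = fun y => deriv (fun y => u y t) y - deriv ustar y * (1 - (1 - W₀) * Real.exp (-(c * W₀) * t)) := by
        funext y
        exact ((hreg_x y t ht).1.hasDerivAt.sub ((hsd1 y).hasDerivAt.mul_const _)).deriv
      have hdd : deriv (deriv fun y => u y t - ustar y * (1 - (1 - W₀) * Real.exp (-(c * W₀) * t))) x
          = deriv (deriv fun y => u y t) x
            - deriv (deriv ustar) x * (1 - (1 - W₀) * Real.exp (-(c * W₀) * t)) := by
        rw [hder]
        exact ((hreg_x x t ht).2.hasDerivAt.sub ((hsd2 x).hasDerivAt.mul_const _)).deriv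
      have hdt : deriv (fun s => u x s - ustar x * (1 - (1 - W₀) * Real.exp (-(c * W₀) * s))) t
          = deriv (fun s => u x s) t
            - ustar x * -((1 - W₀) * (-(c * W₀) * Real.exp (-(c * W₀) * t))) := by
        exact ((hreg_t x t ht).hasDerivAt.sub
          ((((aux_exp_affine (-(c * W₀)) t).const_mul (1 - W₀)).const_sub 1).const_mul
            (ustar x))).deriv
      rw [hdd, hdt, hpde x t ht]
      have hseq' : deriv (deriv ustar) x = -(ustar x * (g x - ustar x)) := by
        linarith [hseq x]
      rw [hseq']
      have hE : 0 < Real.exp (-(c * W₀) * t) := Real.exp_pos _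
      have hE1 : Real.exp (-(c * W₀) * t) ≤ 1 := by
        rw [Real.exp_le_one_iff]; nlinarith [mul_pos hc hW₀pos]
      have hsx := hspos x
      have hlx := hlow x
      have hWW : W₀ ≤ 1 - (1 - W₀) * Real.exp (-(c * W₀) * t) := by nlinarith
      have hkey : 0 ≤ ustar x * ((1 - W₀) * Real.exp (-(c * W₀) * t)) *
          (ustar x * (1 - (1 - W₀) * Real.exp (-(c * W₀) * t)) - c * W₀) := by
        apply mul_nonneg
        · apply mul_nonneg hsx.le
          apply mul_nonneg (by linarith) hE.le
        · nlinarith [mul_le_mul hlx hWW hW₀pos.le hsx.le]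
      nlinarith [hkey]
    · -- h bounded above
      intro x t ht htT
      beta_reduce
      have hE : 0 < Real.exp (-(c * W₀) * t) := Real.exp_pos _
      have hE1 : Real.exp (-(c * W₀) * t) ≤ 1 := by
        rw [Real.exp_le_one_iff]; nlinarith [mul_pos hc hW₀pos]
      have hWW : W₀ ≤ 1 - (1 - W₀) * Real.exp (-(c * W₀) * t) := by nlinarith
      have h3 : 0 < ustar x * (1 - (1 - W₀) * Real.exp (-(c * W₀) * t)) := by
        nlinarith [hspos x]
      have h4 := hCudn x t (le_of_lt ht)
      have h5 := hKg x
      linarith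
    · -- initial data
      intro x
      beta_reduce
      rw [hinit x]
      have hE : Real.exp (-(c * W₀) * 0) = 1 := by norm_num
      rw [hE, mul_one]
      have h1 : ustar x * (1 - (1 - W₀)) = ustar x * W₀ := by ring
      rw [h1]
      have h2 : ustar x * W₀ ≤ Cs * W₀ := mul_le_mul_of_nonneg_right (hCs x) hW₀pos.le
      linarith [(hu₀ x).1]
  -- final limit argument
  intro ε hε
  have hd1 : Tendsto (fun t : ℝ => Real.exp (-c * t)) atTop (𝓝 0) := by
    apply Real.tendsto_exp_atBot.comp
    exact Tendsto.const_mul_atTop_of_neg (by linarith : -c < 0) tendsto_id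
  have hd2 : Tendsto (fun t : ℝ => Real.exp (-(c * W₀) * t)) atTop (𝓝 0) := by
    apply Real.tendsto_exp_atBot.comp
    exact Tendsto.const_mul_atTop_of_neg (by nlinarith [mul_pos hc hW₀pos] : -(c * W₀) < 0) tendsto_id
  have hdecay : Tendsto (fun t : ℝ => Cs * A * Real.exp (-c * t) + Cs * Real.exp (-(c * W₀) * t))
      atTop (𝓝 0) := by
    have := (hd1.const_mul (Cs * A)).add (hd2.const_mul Cs)
    simpa using this
  have hev := hdecay.eventually (gt_mem_nhds hε)
  rw [eventually_atTop] at hev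
  obtain ⟨T, hT⟩ := hev
  refine ⟨max T 0, fun t ht x => ?_⟩
  have ht0 : 0 ≤ t := le_trans (le_max_right T 0) ht
  have htT : T ≤ t := le_trans (le_max_left T 0) ht
  have hb := hT t htT
  have hE : 0 < Real.exp (-c * t) := Real.exp_pos _
  have hE' : 0 < Real.exp (-(c * W₀) * t) := Real.exp_pos _
  have hup := hupper x t ht0
  have hlo := hlower x t ht0
  have hsx := hspos x
  have hCsx := hCs x
  rw [abs_sub_lt_iff]
  constructor
  · -- u - ustar < ε
    have h1 : u x t - ustar x ≤ ustar x * (A * Real.exp (-c * t)) := by nlinarith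
    have h2 : ustar x * (A * Real.exp (-c * t)) ≤ Cs * A * Real.exp (-c * t) := by
      nlinarith [mul_nonneg hA0 hE.le]
    nlinarith [mul_pos hCspos hE']
  · -- ustar - u < ε
    have h1 : ustar x - u x t ≤ ustar x * ((1 - W₀) * Real.exp (-(c * W₀) * t)) := by nlinarith
    have h2 : ustar x * ((1 - W₀) * Real.exp (-(c * W₀) * t)) ≤ Cs * Real.exp (-(c * W₀) * t) := by
      nlinarith [mul_pos hCspos hE', mul_nonneg (mul_nonneg hsx.le (by linarith : (0:ℝ) ≤ W₀)) hE'.le]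
    nlinarith [mul_nonneg (mul_nonneg hCspos.le hA0) hE.le]
end

section
/- Fix μ > 0, let g : ℝ → ℝ be Bohr almost periodic with inf g > 0, and let (ũ, h̃) be an almost periodic semi-wave solution of (FBP_g) connecting u*_g and 0. Then there exist ε > 0 and δ > 0 such that ũ(x, t) ≥ ε for every t ∈ ℝ and every x ≤ h̃(t) − δ. -/
/-- `(u, h)` is a classical solution of the free boundary problem
`u_t = u_xx + u (g x - u)` for `x < h t`, `u (h t) t = 0`, `h' t = -μ u_x (h t) t`,
for times `t` in the set `J`. -/
structure IsFBPSol (μ : ℝ) (g : ℝ → ℝ) (J : Set ℝ) (u : ℝ → ℝ → ℝ) (h : ℝ → ℝ) : Prop where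
  h_diff : ∀ t ∈ J, DifferentiableAt ℝ h t
  h_deriv_cont : ContinuousOn (deriv h) J
  u_cont : ContinuousOn (fun p : ℝ × ℝ => u p.1 p.2) {p : ℝ × ℝ | p.2 ∈ J ∧ p.1 ≤ h p.2}
  u_reg_x : ∀ t ∈ J, ∀ x < h t, DifferentiableAt ℝ (fun y => u y t) x ∧
      DifferentiableAt ℝ (deriv fun y => u y t) x
  u_reg_t : ∀ t ∈ J, ∀ x < h t, DifferentiableAt ℝ (fun s => u x s) t
  pde : ∀ t ∈ J, ∀ x < h t,
      deriv (fun s => u x s) t = deriv (deriv fun y => u y t) x + u x t * (g x - u x t)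
  bdry : ∀ t ∈ J, u (h t) t = 0
  stefan : ∀ t ∈ J, deriv h t = -μ * deriv (fun y => u y t) (h t)

/-- The profile `v (ξ, τ) = u (ξ + τ, h⁻¹ τ)` of a solution with strictly monotone front `h`. -/
noncomputable def profile (u : ℝ → ℝ → ℝ) (h : ℝ → ℝ) (ξ τ : ℝ) : ℝ :=
  u (ξ + τ) (Function.invFun h τ)

/-- `(u, h)` is an almost periodic semi-wave solution of the free boundary problem
connecting the steady state `ustar` and `0`. -/
structure IsAPSemiWave (μ : ℝ) (g ustar : ℝ → ℝ) (u : ℝ → ℝ → ℝ) (h : ℝ → ℝ) : Prop where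
  sol : IsFBPSol μ g Set.univ u h
  bdd : ∃ C : ℝ, ∀ x t : ℝ, |u x t| ≤ C
  pos : ∀ t : ℝ, ∀ x < h t, 0 < u x t
  mono : StrictMono h
  tendsto_top : Filter.Tendsto h Filter.atTop Filter.atTop
  tendsto_bot : Filter.Tendsto h Filter.atBot Filter.atBot
  almost_periodic : ∀ ε > (0 : ℝ), ∃ L > (0 : ℝ), ∀ r : ℝ, ∃ s ∈ Set.Icc r (r + L),
      ∀ ξ ≤ (0 : ℝ), ∀ τ : ℝ, |profile u h ξ (τ + s) - profile u h ξ τ| < ε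
  connects : ∀ ε > (0 : ℝ), ∃ X : ℝ, ∀ ξ ≤ X, ∀ τ : ℝ,
      |profile u h ξ τ - ustar (ξ + τ)| < ε


section SemiWaveAux
open Set Filter Real Topology

lemma blowup_right {u : ℝ → ℝ} (hu : Differentiable ℝ u)
    (hpos : ∀ x, 0 < u x) {p : ℝ}
    (hanti : AntitoneOn (deriv u) (Set.Ici p)) (hneg : deriv u p < 0) : False := by
  obtain ⟨x, hxdef⟩ : ∃ x, x = p + u p / (-(deriv u p)) := ⟨_, rfl⟩
  have h1 : 0 < u p / (-(deriv u p)) := div_pos (hpos p) (by linarith)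
  have hpx : p < x := by rw [hxdef]; linarith
  obtain ⟨ξ, hξ, hs⟩ := exists_deriv_eq_slope u hpx (hu.continuous.continuousOn)
    (hu.differentiableOn)
  have h2 : (u x - u p) / (x - p) ≤ deriv u p := by
    rw [← hs]; exact hanti (le_refl p) (le_of_lt hξ.1) hξ.1.le
  have h4 : 0 < x - p := by linarith
  have h5 : u x - u p ≤ deriv u p * (x - p) := by
    have := (div_le_iff₀ h4).mp h2; linarith
  have h6 : deriv u p * (x - p) = - u p := by
    have hd0 : deriv u p ≠ 0 := ne_of_lt hneg
    have h7 : x - p = u p / (-(deriv u p)) := by rw [hxdef]; ring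
    rw [h7, div_neg, mul_neg, mul_div_cancel₀ _ hd0]
  have := hpos x
  linarith

lemma blowup_left {u : ℝ → ℝ} (hu : Differentiable ℝ u)
    (hpos : ∀ x, 0 < u x) {p : ℝ}
    (hanti : AntitoneOn (deriv u) (Set.Iic p)) (hposd : 0 < deriv u p) : False := by
  obtain ⟨x, hxdef⟩ : ∃ x, x = p - u p / deriv u p := ⟨_, rfl⟩
  have h1 : 0 < u p / deriv u p := div_pos (hpos p) hposd
  have hpx : x < p := by rw [hxdef]; linarith
  obtain ⟨ξ, hξ, hs⟩ := exists_deriv_eq_slope u hpx (hu.continuous.continuousOn)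
    (hu.differentiableOn)
  have h2 : deriv u p ≤ (u p - u x) / (p - x) := by
    rw [← hs]; exact hanti (le_of_lt hξ.2) (le_refl p) hξ.2.le
  have h4 : 0 < p - x := by linarith
  have h5 : deriv u p * (p - x) ≤ u p - u x := by
    have := (le_div_iff₀ h4).mp h2; linarith
  have h6 : deriv u p * (p - x) = u p := by
    have hd0 : deriv u p ≠ 0 := ne_of_gt hposd
    have h7 : p - x = u p / deriv u p := by rw [hxdef]; ring
    rw [h7, mul_div_cancel₀ _ hd0]
  have := hpos x
  linarith

lemma steady_contDiff_deriv {g u : ℝ → ℝ} (hu : IsBddPosSteadyState g u) :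
    ContDiff ℝ 1 (deriv u) := by
  have h2 : ContDiff ℝ (1 + 1 : WithTop ℕ∞) u := by
    have := hu.1; norm_num at this ⊢; exact this
  exact (contDiff_succ_iff_deriv.mp h2).2.2

lemma steady_deriv2_cont {g u : ℝ → ℝ} (hu : IsBddPosSteadyState g u) :
    Continuous (deriv (deriv u)) :=
  (steady_contDiff_deriv hu).continuous_deriv le_rfl

lemma steady_g_continuous {g u : ℝ → ℝ} (hu : IsBddPosSteadyState g u) :
    Continuous g := by
  have hne : ∀ x, u x ≠ 0 := fun x => ne_of_gt (hu.2.2.1 x)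
  have hgx : ∀ x, g x = u x - deriv (deriv u) x / u x := by
    intro x
    have h := hu.2.2.2 x
    have hx := hne x
    field_simp
    nlinarith [h]
  have : g = fun x => u x - deriv (deriv u) x / u x := funext hgx
  rw [this]
  exact (hu.1.continuous).sub ((steady_deriv2_cont hu).div hu.1.continuous hne)

lemma steady_ge {g u : ℝ → ℝ} {m : ℝ} (hm : 0 < m) (hg : ∀ x, m ≤ g x)
    (hu : IsBddPosSteadyState g u) : ∀ x, m ≤ u x := by
  by_contra hcon
  push_neg at hcon
  obtain ⟨x₀, hx₀⟩ := hcon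
  have hdiff : Differentiable ℝ u := hu.1.differentiable (by norm_num)
  have hd1 : Differentiable ℝ (deriv u) :=
    (steady_contDiff_deriv hu).differentiable (by norm_num)
  have hpos := hu.2.2.1
  have hneg2 : ∀ x, u x < m → deriv (deriv u) x < 0 := by
    intro x hx
    have h := hu.2.2.2 x
    have h2 : deriv (deriv u) x = u x * (u x - g x) := by nlinarith [h]
    rw [h2]
    exact mul_neg_of_pos_of_neg (hpos x) (by linarith [hg x])
  have hAnti : ∀ s : Set ℝ, Convex ℝ s → (∀ x ∈ interior s, u x < m) →
      AntitoneOn (deriv u) s := by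
    intro s hs hint
    exact antitoneOn_of_deriv_nonpos hs (hd1.continuous.continuousOn)
      (hd1.differentiableOn) (fun x hx => (hneg2 x (hint x hx)).le)
  by_cases hSRne : {x : ℝ | x₀ ≤ x ∧ m ≤ u x}.Nonempty
  · have hSRclosed : IsClosed {x : ℝ | x₀ ≤ x ∧ m ≤ u x} := by
      have he : {x : ℝ | x₀ ≤ x ∧ m ≤ u x} = Ici x₀ ∩ u ⁻¹' Ici m := by
        ext x; simp [mem_Ici]
      rw [he]
      exact isClosed_Ici.inter (isClosed_Ici.preimage hdiff.continuous)
    have hbdd : BddBelow {x : ℝ | x₀ ≤ x ∧ m ≤ u x} := ⟨x₀, fun x hx => hx.1⟩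
    have hbmem := hSRclosed.csInf_mem hSRne hbdd
    have hx₀b : x₀ < sInf {x : ℝ | x₀ ≤ x ∧ m ≤ u x} := by
      rcases lt_or_eq_of_le hbmem.1 with h | h
      · exact h
      · exfalso; rw [← h] at hbmem; linarith [hbmem.2]
    have hbelow : ∀ x, x₀ ≤ x → x < sInf {x : ℝ | x₀ ≤ x ∧ m ≤ u x} → u x < m := by
      intro x h1 h2
      by_contra hge; push_neg at hge
      exact absurd (csInf_le hbdd ⟨h1, hge⟩) (not_le.mpr h2)
    obtain ⟨ξ₂, hξ₂, hs₂⟩ := exists_deriv_eq_slope u hx₀b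
      hdiff.continuous.continuousOn hdiff.differentiableOn
    have hd₂ : 0 < deriv u ξ₂ := by
      rw [hs₂]
      apply div_pos (by linarith [hbmem.2]) (by linarith)
    by_cases hSLne : {x : ℝ | x ≤ x₀ ∧ m ≤ u x}.Nonempty
    · have hSLclosed : IsClosed {x : ℝ | x ≤ x₀ ∧ m ≤ u x} := by
        have he : {x : ℝ | x ≤ x₀ ∧ m ≤ u x} = Iic x₀ ∩ u ⁻¹' Ici m := by
          ext x; simp [mem_Iic]
        rw [he]
        exact isClosed_Iic.inter (isClosed_Ici.preimage hdiff.continuous)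
      have hbddL : BddAbove {x : ℝ | x ≤ x₀ ∧ m ≤ u x} := ⟨x₀, fun x hx => hx.1⟩
      have hamem := hSLclosed.csSup_mem hSLne hbddL
      have hax₀ : sSup {x : ℝ | x ≤ x₀ ∧ m ≤ u x} < x₀ := by
        rcases lt_or_eq_of_le hamem.1 with h | h
        · exact h
        · exfalso; rw [h] at hamem; linarith [hamem.2]
      have habove : ∀ x, sSup {x : ℝ | x ≤ x₀ ∧ m ≤ u x} < x → x ≤ x₀ → u x < m := by
        intro x h1 h2
        by_contra hge; push_neg at hge
        exact absurd (le_csSup hbddL ⟨h2, hge⟩) (not_le.mpr h1)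
      obtain ⟨ξ₁, hξ₁, hs₁⟩ := exists_deriv_eq_slope u hax₀
        hdiff.continuous.continuousOn hdiff.differentiableOn
      have hd₁ : deriv u ξ₁ < 0 := by
        rw [hs₁]
        apply div_neg_of_neg_of_pos (by linarith [hamem.2]) (by linarith)
      have hξ12 : ξ₁ < ξ₂ := lt_trans hξ₁.2 hξ₂.1
      have hA := hAnti (Icc ξ₁ ξ₂) (convex_Icc _ _) (by
        intro x hx
        rw [interior_Icc] at hx
        rcases le_or_gt x x₀ with h | h
        · exact habove x (lt_trans hξ₁.1 hx.1) h
        · exact hbelow x h.le (lt_trans hx.2 hξ₂.2))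
      have := hA (left_mem_Icc.mpr hξ12.le) (right_mem_Icc.mpr hξ12.le) hξ12.le
      linarith
    · have hLall : ∀ x, x ≤ x₀ → u x < m := by
        intro x hx
        by_contra hge; push_neg at hge
        exact hSLne ⟨x, hx, hge⟩
      have hA := hAnti (Iic ξ₂) (convex_Iic _) (by
        intro x hx
        rw [interior_Iic] at hx
        rcases le_or_gt x x₀ with h | h
        · exact hLall x h
        · exact hbelow x h.le (lt_trans hx hξ₂.2))
      exact blowup_left hdiff hpos hA hd₂
  · have hRall : ∀ x, x₀ ≤ x → u x < m := by
      intro x hx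
      by_contra hge; push_neg at hge
      exact hSRne ⟨x, hx, hge⟩
    by_cases hSLne : {x : ℝ | x ≤ x₀ ∧ m ≤ u x}.Nonempty
    · have hSLclosed : IsClosed {x : ℝ | x ≤ x₀ ∧ m ≤ u x} := by
        have he : {x : ℝ | x ≤ x₀ ∧ m ≤ u x} = Iic x₀ ∩ u ⁻¹' Ici m := by
          ext x; simp [mem_Iic]
        rw [he]
        exact isClosed_Iic.inter (isClosed_Ici.preimage hdiff.continuous)
      have hbddL : BddAbove {x : ℝ | x ≤ x₀ ∧ m ≤ u x} := ⟨x₀, fun x hx => hx.1⟩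
      have hamem := hSLclosed.csSup_mem hSLne hbddL
      have hax₀ : sSup {x : ℝ | x ≤ x₀ ∧ m ≤ u x} < x₀ := by
        rcases lt_or_eq_of_le hamem.1 with h | h
        · exact h
        · exfalso; rw [h] at hamem; linarith [hamem.2]
      have habove : ∀ x, sSup {x : ℝ | x ≤ x₀ ∧ m ≤ u x} < x → x ≤ x₀ → u x < m := by
        intro x h1 h2
        by_contra hge; push_neg at hge
        exact absurd (le_csSup hbddL ⟨h2, hge⟩) (not_le.mpr h1)
      obtain ⟨ξ₁, hξ₁, hs₁⟩ := exists_deriv_eq_slope u hax₀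
        hdiff.continuous.continuousOn hdiff.differentiableOn
      have hd₁ : deriv u ξ₁ < 0 := by
        rw [hs₁]
        apply div_neg_of_neg_of_pos (by linarith [hamem.2]) (by linarith)
      have hA := hAnti (Ici ξ₁) (convex_Ici _) (by
        intro x hx
        rw [interior_Ici] at hx
        rcases le_or_gt x x₀ with h | h
        · exact habove x (lt_trans hξ₁.1 hx) h
        · exact hRall x h.le)
      exact blowup_right hdiff hpos hA hd₁
    · have hLall : ∀ x, x ≤ x₀ → u x < m := by
        intro x hx
        by_contra hge; push_neg at hge
        exact hSLne ⟨x, hx, hge⟩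
      have hall : ∀ x, u x < m := by
        intro x
        rcases le_or_gt x x₀ with h | h
        · exact hLall x h
        · exact hRall x h.le
      have hsa : StrictAnti (deriv u) :=
        strictAnti_of_deriv_neg (fun x => hneg2 x (hall x))
      rcases lt_trichotomy (deriv u x₀) 0 with h | h | h
      · exact blowup_right hdiff hpos (hsa.antitone.antitoneOn _) h
      · have h2 : deriv u (x₀ + 1) < 0 := by
          have := hsa (show x₀ < x₀ + 1 by linarith)
          linarith
        exact blowup_right hdiff hpos (hsa.antitone.antitoneOn _) h2
      · exact blowup_left hdiff hpos (hsa.antitone.antitoneOn _) h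

lemma deriv_nonpos_right_min {f : ℝ → ℝ} {a b : ℝ} (hab : a < b)
    (hf : DifferentiableAt ℝ f b) (hmin : ∀ t, a ≤ t → t ≤ b → f b ≤ f t) :
    deriv f b ≤ 0 := by
  have h := hasDerivAt_iff_tendsto_slope.mp hf.hasDerivAt
  have h2 : Tendsto (slope f b) (𝓝[<] b) (𝓝 (deriv f b)) :=
    h.mono_left (nhdsWithin_mono _ (fun x hx => ne_of_lt hx))
  refine le_of_tendsto h2 ?_
  filter_upwards [Ioo_mem_nhdsLT_of_mem (⟨hab, le_refl b⟩ : b ∈ Ioc a b)] with t ht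
  rw [slope_def_field]
  apply div_nonpos_of_nonneg_of_nonpos
  · have := hmin t ht.1.le ht.2.le
    linarith
  · linarith [ht.2]

lemma isLocalMin_deriv2_nonneg {f : ℝ → ℝ} {a : ℝ}
    (hd : ∀ᶠ y in 𝓝 a, DifferentiableAt ℝ f y)
    (hd2 : DifferentiableAt ℝ (deriv f) a)
    (hmin : IsLocalMin f a) : 0 ≤ deriv (deriv f) a := by
  by_contra hcon
  push_neg at hcon
  have h0 : deriv f a = 0 := hmin.deriv_eq_zero
  have h1 : Tendsto (slope (deriv f) a) (𝓝[≠] a) (𝓝 (deriv (deriv f) a)) :=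
    hasDerivAt_iff_tendsto_slope.mp hd2.hasDerivAt
  have h2 : ∀ᶠ y in 𝓝[≠] a, slope (deriv f) a y < 0 :=
    h1.eventually (eventually_lt_nhds hcon)
  rw [eventually_nhdsWithin_iff] at h2
  have h3 : ∀ᶠ y in 𝓝 a, (y ∈ ({a}ᶜ : Set ℝ) → slope (deriv f) a y < 0) ∧
      DifferentiableAt ℝ f y ∧ f a ≤ f y := h2.and (hd.and hmin)
  rw [Metric.eventually_nhds_iff] at h3
  obtain ⟨δ, hδ, hball⟩ := h3
  have hy : a < a + δ / 2 := by linarith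
  have hsub : ∀ z ∈ Icc a (a + δ / 2), dist z a < δ := by
    intro z hz
    rw [Real.dist_eq, abs_lt]
    constructor <;> [linarith [hz.1]; linarith [hz.2]]
  obtain ⟨ξ, hξ, hs⟩ := exists_deriv_eq_slope f hy
    (fun z hz => ((hball (hsub z hz)).2.1.continuousAt).continuousWithinAt)
    (fun z hz => ((hball (hsub z ⟨hz.1.le, hz.2.le⟩)).2.1).differentiableWithinAt)
  have hfy : f a ≤ f (a + δ / 2) :=
    (hball (hsub _ (right_mem_Icc.mpr hy.le))).2.2
  have hderivξ : 0 ≤ deriv f ξ := by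
    rw [hs]
    apply div_nonneg (by linarith) (by linarith [hξ.1, hξ.2])
  have hξa : ξ ≠ a := ne_of_gt hξ.1
  have hslopeξ : slope (deriv f) a ξ < 0 :=
    (hball (hsub ξ ⟨hξ.1.le, hξ.2.le⟩)).1 hξa
  rw [slope_def_field, h0] at hslopeξ
  have hpos : 0 < ξ - a := by linarith [hξ.1]
  have : deriv f ξ < 0 := by
    by_contra hge; push_neg at hge
    exact absurd hslopeξ (not_lt.mpr (div_nonneg (by linarith) hpos.le))
  linarith


set_option maxHeartbeats 1000000 in
theorem semi_wave_uniform_lower_bound (μ : ℝ) (hμ : 0 < μ)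
    (g ustar : ℝ → ℝ) (hg : BohrAlmostPeriodic g)
    (hginf : ∃ m > (0 : ℝ), ∀ x : ℝ, m ≤ g x)
    (hstar : IsBddPosSteadyState g ustar)
    (utld : ℝ → ℝ → ℝ) (htld : ℝ → ℝ)
    (hsw : IsAPSemiWave μ g ustar utld htld) :
    ∃ ε > (0 : ℝ), ∃ δ > (0 : ℝ), ∀ t : ℝ, ∀ x ≤ htld t - δ, ε ≤ utld x t := by
  obtain ⟨m, hm, hgm⟩ := hginf
  have hstarge : ∀ x, m ≤ ustar x := steady_ge hm hgm hstar
  obtain ⟨X, hX⟩ := hsw.connects (m / 2) (by linarith)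
  have hgc : Continuous g := steady_g_continuous hstar
  obtain ⟨ρ, hρdef⟩ : ∃ ρ : ℝ, ρ = Real.sqrt (m / 2) := ⟨_, rfl⟩
  have hρ : 0 < ρ := hρdef ▸ Real.sqrt_pos.mpr (by linarith)
  have hρ2 : ρ * ρ = m / 2 := by rw [hρdef]; exact Real.mul_self_sqrt (by linarith)
  obtain ⟨R, hRdef⟩ : ∃ R : ℝ, R = (π / 2) / ρ := ⟨_, rfl⟩
  have hR : 0 < R := hRdef ▸ div_pos (by positivity) hρ
  have hRρ : R * ρ = π / 2 := by rw [hRdef]; exact div_mul_cancel₀ _ (ne_of_gt hρ)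
  obtain ⟨X', hX'def⟩ : ∃ X' : ℝ, X' = min X (-1) := ⟨_, rfl⟩
  have hX'le : X' ≤ X := hX'def ▸ min_le_left _ _
  have hX'neg : X' ≤ -1 := hX'def ▸ min_le_right _ _
  refine ⟨m / 4, by linarith, R - X' + 1, by linarith, ?_⟩
  intro t₁ x₁ hx₁
  -- front facts
  have hhdiff : Differentiable ℝ htld := fun t => hsw.sol.h_diff t (mem_univ t)
  have hsurj : Function.Surjective htld :=
    hhdiff.continuous.surjective hsw.tendsto_top hsw.tendsto_bot
  obtain ⟨t₀, ht₀⟩ := hsurj (x₁ + R - X')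
  have ht01 : t₀ < t₁ := by
    have h1 : htld t₀ < htld t₁ := by rw [ht₀]; linarith
    exact hsw.mono.lt_iff_lt.mp h1
  have hRlt : ∀ t, t₀ ≤ t → x₁ + R + 1 ≤ htld t := by
    intro t ht
    have h1 := hsw.mono.monotone ht
    rw [ht₀] at h1; linarith
  -- the subsolution
  obtain ⟨κ, hκdef⟩ : ∃ κ : ℝ, κ = m / 4 := ⟨_, rfl⟩
  have hκpos : 0 < κ := by rw [hκdef]; linarith
  obtain ⟨ψ, hψdef⟩ : ∃ ψ : ℝ → ℝ, ψ = fun x => κ * Real.cos ((x - x₁) * ρ) := ⟨_, rfl⟩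
  have hψ' : ∀ y, HasDerivAt ψ (-(κ * ρ) * Real.sin ((y - x₁) * ρ)) y := by
    intro y
    have h1 : HasDerivAt (fun x : ℝ => (x - x₁) * ρ) ρ y := by
      simpa using ((hasDerivAt_id y).sub_const x₁).mul_const ρ
    have h2 := (Real.hasDerivAt_cos ((y - x₁) * ρ)).comp y h1
    rw [hψdef]
    exact (h2.const_mul κ).congr_deriv (by ring)
  have hψ'' : ∀ y, HasDerivAt (fun z => -(κ * ρ) * Real.sin ((z - x₁) * ρ))
      (-(ρ * ρ) * ψ y) y := by
    intro y
    have h1 : HasDerivAt (fun x : ℝ => (x - x₁) * ρ) ρ y := by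
      simpa using ((hasDerivAt_id y).sub_const x₁).mul_const ρ
    have h2 := (Real.hasDerivAt_sin ((y - x₁) * ρ)).comp y h1
    exact (h2.const_mul (-(κ * ρ))).congr_deriv (by rw [hψdef]; ring)
  have hψbnd : ∀ x ∈ Icc (x₁ - R) (x₁ + R), 0 ≤ ψ x ∧ ψ x ≤ κ := by
    intro x hx
    have harg : (x - x₁) * ρ ∈ Icc (-(π / 2)) (π / 2) := by
      constructor
      · nlinarith [hx.1]
      · nlinarith [hx.2]
    constructor
    · rw [hψdef]
      exact mul_nonneg hκpos.le (Real.cos_nonneg_of_mem_Icc harg)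
    · rw [hψdef]
      show κ * Real.cos ((x - x₁) * ρ) ≤ κ
      nlinarith [Real.cos_le_one ((x - x₁) * ρ), hκpos]
  have hψleft : ψ (x₁ - R) = 0 := by
    rw [hψdef]
    show κ * Real.cos ((x₁ - R - x₁) * ρ) = 0
    have h1 : (x₁ - R - x₁) * ρ = -(π / 2) := by
      rw [show x₁ - R - x₁ = -R by ring]; linarith [hRρ]
    rw [h1, Real.cos_neg, Real.cos_pi_div_two, mul_zero]
  have hψright : ψ (x₁ + R) = 0 := by
    rw [hψdef]
    show κ * Real.cos ((x₁ + R - x₁) * ρ) = 0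
    have h1 : (x₁ + R - x₁) * ρ = π / 2 := by
      rw [show x₁ + R - x₁ = R by ring]; linarith [hRρ]
    rw [h1, Real.cos_pi_div_two, mul_zero]
  have hψcent : ψ x₁ = κ := by rw [hψdef]; simp
  -- initial lower bound
  have hinit : ∀ x ∈ Icc (x₁ - R) (x₁ + R), ψ x ≤ utld x t₀ := by
    intro x hx
    have hξ : x - htld t₀ ≤ X := by
      rw [ht₀]; linarith [hx.2, hX'le]
    have h7 := hX (x - htld t₀) hξ (htld t₀)
    have hinv : Function.invFun htld (htld t₀) = t₀ :=
      Function.leftInverse_invFun hsw.mono.injective t₀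
    rw [profile, hinv, sub_add_cancel] at h7
    have h8 := (abs_lt.mp h7).1
    have h9 := hstarge x
    have h10 := (hψbnd x hx).2
    linarith [hκdef ▸ h10]
  -- max of g on the interval
  have hicc : x₁ ∈ Icc (x₁ - R) (x₁ + R) := ⟨by linarith, by linarith⟩
  obtain ⟨xG, hxG, hGmax⟩ := isCompact_Icc.exists_isMaxOn ⟨x₁, hicc⟩ hgc.continuousOn
  obtain ⟨lam, hlamdef⟩ : ∃ lam : ℝ, lam = g xG + 1 := ⟨_, rfl⟩
  -- the rectangle and min of Z
  have hQsub : ∀ p : ℝ × ℝ, p ∈ Icc (x₁ - R) (x₁ + R) ×ˢ Icc t₀ t₁ →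
      p.1 + 1 ≤ htld p.2 := by
    intro p hp
    have h1 := hRlt p.2 hp.2.1
    have h2 := hp.1.2
    linarith
  have hZcont : ContinuousOn
      (fun p : ℝ × ℝ => Real.exp (-lam * (p.2 - t₀)) * (utld p.1 p.2 - ψ p.1))
      (Icc (x₁ - R) (x₁ + R) ×ˢ Icc t₀ t₁) := by
    apply ContinuousOn.mul
    · apply Continuous.continuousOn
      exact Real.continuous_exp.comp (by fun_prop)
    · apply ContinuousOn.sub
      · exact hsw.sol.u_cont.mono (fun p hp => ⟨mem_univ _, by linarith [hQsub p hp]⟩)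
      · apply Continuous.continuousOn
        rw [hψdef]
        fun_prop
  obtain ⟨pm, hpmQ, hpmin'⟩ := (isCompact_Icc.prod isCompact_Icc).exists_isMinOn
    ⟨(x₁, t₁), ⟨hicc, ht01.le, le_rfl⟩⟩ hZcont
  rw [isMinOn_iff] at hpmin'
  obtain ⟨xs, ts⟩ := pm
  have hpmin : ∀ y : ℝ, ∀ s : ℝ, y ∈ Icc (x₁ - R) (x₁ + R) → s ∈ Icc t₀ t₁ →
      Real.exp (-lam * (ts - t₀)) * (utld xs ts - ψ xs) ≤
        Real.exp (-lam * (s - t₀)) * (utld y s - ψ y) := by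
    intro y s hy hs
    exact hpmin' (y, s) ⟨hy, hs⟩
  have hxsIcc : xs ∈ Icc (x₁ - R) (x₁ + R) := hpmQ.1
  have htsIcc : ts ∈ Icc t₀ t₁ := hpmQ.2
  have hxslt : xs + 1 ≤ htld ts := hQsub (xs, ts) hpmQ
  have hZnn : 0 ≤ Real.exp (-lam * (ts - t₀)) * (utld xs ts - ψ xs) := by
    by_contra hneg
    push_neg at hneg
    have he : 0 < Real.exp (-lam * (ts - t₀)) := Real.exp_pos _
    have hW : utld xs ts - ψ xs < 0 := by nlinarith
    have hupos : 0 < utld xs ts := hsw.pos ts xs (by linarith)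
    have hψnn : 0 ≤ ψ xs := (hψbnd xs hxsIcc).1
    have hψle : ψ xs ≤ κ := (hψbnd xs hxsIcc).2
    -- interior position
    have hxs1 : x₁ - R < xs := by
      rcases lt_or_eq_of_le hxsIcc.1 with h | h
      · exact h
      · exfalso
        rw [← h] at hW hupos
        rw [hψleft] at hW
        linarith
    have hxs2 : xs < x₁ + R := by
      rcases lt_or_eq_of_le hxsIcc.2 with h | h
      · exact h
      · exfalso
        rw [h] at hW hupos
        rw [hψright] at hW
        linarith
    have hts0 : t₀ < ts := by
      rcases lt_or_eq_of_le htsIcc.1 with h | h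
      · exact h
      · exfalso
        have h1 := hinit xs hxsIcc
        rw [← h] at hneg
        rw [sub_self, mul_zero, Real.exp_zero, one_mul] at hneg
        linarith
    -- time derivative at the min
    have hut : DifferentiableAt ℝ (fun s => utld xs s) ts :=
      hsw.sol.u_reg_t ts (mem_univ _) xs (by linarith)
    have hexp : HasDerivAt (fun s : ℝ => Real.exp (-lam * (s - t₀)))
        (Real.exp (-lam * (ts - t₀)) * (-lam)) ts := by
      have h1 : HasDerivAt (fun s : ℝ => -lam * (s - t₀)) (-lam) ts := by
        simpa using ((hasDerivAt_id ts).sub_const t₀).const_mul (-lam)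
      exact h1.exp
    have hθ : HasDerivAt (fun s => Real.exp (-lam * (s - t₀)) * (utld xs s - ψ xs))
        ((Real.exp (-lam * (ts - t₀)) * (-lam)) * (utld xs ts - ψ xs)
          + Real.exp (-lam * (ts - t₀)) * deriv (fun s => utld xs s) ts) ts :=
      hexp.mul (hut.hasDerivAt.sub_const (ψ xs))
    have hθle : (Real.exp (-lam * (ts - t₀)) * (-lam)) * (utld xs ts - ψ xs)
        + Real.exp (-lam * (ts - t₀)) * deriv (fun s => utld xs s) ts ≤ 0 := by
      rw [← hθ.deriv]
      apply deriv_nonpos_right_min hts0 hθ.differentiableAt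
      intro t h1 h2
      exact hpmin xs t hxsIcc ⟨h1, le_trans h2 htsIcc.2⟩
    -- space second derivative at the min
    have hopen : Iio (htld ts) ∈ 𝓝 xs := Iio_mem_nhds (by linarith)
    have hψd : ∀ y, DifferentiableAt ℝ ψ y := fun y => (hψ' y).differentiableAt
    have hφdiff : ∀ᶠ y in 𝓝 xs, DifferentiableAt ℝ
        (fun z => Real.exp (-lam * (ts - t₀)) * (utld z ts - ψ z)) y := by
      filter_upwards [hopen] with y hy
      exact ((hsw.sol.u_reg_x ts (mem_univ _) y hy).1.sub (hψd y)).const_mul _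
    have hEv : (deriv fun z => Real.exp (-lam * (ts - t₀)) * (utld z ts - ψ z)) =ᶠ[𝓝 xs]
        (fun y => Real.exp (-lam * (ts - t₀)) *
          ((deriv fun z => utld z ts) y - -(κ * ρ) * Real.sin ((y - x₁) * ρ))) := by
      filter_upwards [hopen] with y hy
      rw [deriv_const_mul (d := fun z => utld z ts - ψ z) _ ((hsw.sol.u_reg_x ts (mem_univ _) y hy).1.sub (hψd y)),
        deriv_fun_sub (hsw.sol.u_reg_x ts (mem_univ _) y hy).1 (hψd y), (hψ' y).deriv]
    have hd2' : DifferentiableAt ℝ (fun y => Real.exp (-lam * (ts - t₀)) *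
        ((deriv fun z => utld z ts) y - -(κ * ρ) * Real.sin ((y - x₁) * ρ))) xs :=
      ((hsw.sol.u_reg_x ts (mem_univ _) xs (by linarith)).2.sub
        (hψ'' xs).differentiableAt).const_mul _
    have hd2 : DifferentiableAt ℝ
        (deriv fun z => Real.exp (-lam * (ts - t₀)) * (utld z ts - ψ z)) xs :=
      (Filter.EventuallyEq.differentiableAt_iff hEv).mpr hd2'
    have hlocmin : IsLocalMin
        (fun z => Real.exp (-lam * (ts - t₀)) * (utld z ts - ψ z)) xs := by
      have hmem : Icc (x₁ - R) (x₁ + R) ∈ 𝓝 xs := Icc_mem_nhds hxs1 hxs2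
      filter_upwards [hmem] with y hy
      exact hpmin y ts hy htsIcc
    have h2nd := isLocalMin_deriv2_nonneg hφdiff hd2 hlocmin
    have hE2 : deriv (deriv fun z => Real.exp (-lam * (ts - t₀)) * (utld z ts - ψ z)) xs
        = Real.exp (-lam * (ts - t₀)) *
          ((deriv (deriv fun z => utld z ts)) xs - -(ρ * ρ) * ψ xs) := by
      rw [hEv.deriv_eq,
        deriv_const_mul (d := fun y => (deriv fun z => utld z ts) y - -(κ * ρ) * Real.sin ((y - x₁) * ρ)) _ ((hsw.sol.u_reg_x ts (mem_univ _) xs (by linarith)).2.sub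
          (hψ'' xs).differentiableAt),
        deriv_fun_sub (hsw.sol.u_reg_x ts (mem_univ _) xs (by linarith)).2
          (hψ'' xs).differentiableAt, (hψ'' xs).deriv]
    rw [hE2] at h2nd
    -- the PDE
    have hpde := hsw.sol.pde ts (mem_univ _) xs (by linarith)
    -- combine
    have hutle : deriv (fun s => utld xs s) ts ≤ lam * (utld xs ts - ψ xs) := by
      have h4 : Real.exp (-lam * (ts - t₀)) * deriv (fun s => utld xs s) ts ≤
          Real.exp (-lam * (ts - t₀)) * (lam * (utld xs ts - ψ xs)) := by nlinarith [hθle]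
      exact le_of_mul_le_mul_left h4 he
    have huxxge : -(ρ * ρ) * ψ xs ≤ (deriv (deriv fun z => utld z ts)) xs := by
      have h5 : Real.exp (-lam * (ts - t₀)) * (-(ρ * ρ) * ψ xs) ≤
          Real.exp (-lam * (ts - t₀)) * ((deriv (deriv fun z => utld z ts)) xs) := by
        nlinarith [h2nd]
      exact le_of_mul_le_mul_left h5 he
    have hγm : m ≤ g xs := hgm xs
    have hγG : g xs ≤ g xG := hGmax hxsIcc
    have key1 : (m / 2) * ψ xs ≤ ψ xs * (g xs - ψ xs) := by nlinarith [hκdef ▸ hψle]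
    have key2 : (utld xs ts - ψ xs) * (g xs - utld xs ts - ψ xs) ≤
        lam * (utld xs ts - ψ xs) := by nlinarith [hutle, hpde, huxxge, key1, hρ2]
    have key4 : 0 < lam - (g xs - utld xs ts - ψ xs) := by
      rw [hlamdef]; linarith
    nlinarith [mul_neg_of_neg_of_pos hW key4, key2]
  -- conclude
  have hfin := hpmin x₁ t₁ hicc ⟨ht01.le, le_rfl⟩
  have hZfin : 0 ≤ Real.exp (-lam * (t₁ - t₀)) * (utld x₁ t₁ - ψ x₁) := le_trans hZnn hfin
  have he1 : 0 < Real.exp (-lam * (t₁ - t₀)) := Real.exp_pos _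
  have h6 : ψ x₁ ≤ utld x₁ t₁ := by nlinarith
  rw [hψcent, hκdef] at h6
  exact h6

end SemiWaveAux
end
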